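/- arXiv:1401.7929 — 4 statements merged into one kernel-verified Lean document; each statement's English description precedes it below -/
import Mathlib

section
/- Let d ≥ 1 and let G = C_{m_1} □ C_{m_2} □ ... □ C_{m_d} be the Cartesian product of d cycles with m_i ≥ 2d+1 for all i. Then G is not (2d)^{d-1}·(2d+1)-path-pairable; more precisely, the subgrid G_0 = C_{2d} □ ... □ C_{2d} □ C_{2d+1} (embedded in G) induces a vertex set S with |S| = (2d)^{d-1}·(2d+1) vertices whose edge boundary satisfies d(S) < |S|, violating the cut-condition. -/
open SimpleGraph
open scoped Classical

/-- A graph `G` (on at least `2k` vertices) is `k`-path-pairable if for every choice of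
`2k` pairwise distinct terminals `x 0, …, x (k-1), y 0, …, y (k-1)` there are `k`
pairwise edge-disjoint paths, the `i`-th one joining `x i` to `y i`. -/
def PathPairable {V : Type*} [Fintype V] (G : SimpleGraph V) (k : ℕ) : Prop :=
  2 * k ≤ Fintype.card V ∧
    ∀ x y : Fin k → V, Function.Injective (Sum.elim x y) →
      ∃ p : (i : Fin k) → G.Walk (x i) (y i),
        (∀ i, (p i).IsPath) ∧
          ∀ i j : Fin k, i ≠ j → List.Disjoint (p i).edges (p j).edges

/-- `edgeCut G S` is `d(S)`: the number of edges of `G` with exactly one endpoint in `S`. -/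
noncomputable def edgeCut {V : Type*} [Fintype V] (G : SimpleGraph V) (S : Finset V) : ℕ :=
  (G.edgeSet.toFinite.toFinset.filter fun e => ∃ u v : V, e = s(u, v) ∧ u ∈ S ∧ v ∉ S).card

/-- `inducedEdges G S` is `e(S)`: the number of edges of `G` with both endpoints in `S`,
i.e. the number of edges of the subgraph of `G` induced on `S`. -/
noncomputable def inducedEdges {V : Type*} [Fintype V] (G : SimpleGraph V) (S : Finset V) : ℕ :=
  (G.edgeSet.toFinite.toFinset.filter fun e => ∃ u v : V, e = s(u, v) ∧ u ∈ S ∧ v ∈ S).card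

/-- The Cartesian product of `d` cycles `C_{m 0} □ ⋯ □ C_{m (d-1)}`:
two tuples are adjacent iff they agree in all coordinates except one,
where they are adjacent on the corresponding cycle. -/
def torusGrid (d : ℕ) (m : Fin d → ℕ) : SimpleGraph ((i : Fin d) → Fin (m i)) :=
  SimpleGraph.fromRel (fun x y =>
    ∃ j : Fin d, (SimpleGraph.cycleGraph (m j)).Adj (x j) (y j) ∧ ∀ i, i ≠ j → x i = y i)

private lemma nat_cyc_aux {n u v : ℕ} (hn : 2 ≤ n) (hu : u < n) (hv : v < n) :
    (n - v + u) % n = 1 ↔ (u = v + 1 ∨ (u = 0 ∧ v = n - 1)) := by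
  rcases Nat.lt_or_ge (n - v + u) n with h' | h'
  · rw [Nat.mod_eq_of_lt h']; omega
  · rw [Nat.mod_eq_sub_mod h', Nat.mod_eq_of_lt (by omega)]; omega

lemma cycle_adj_nat {n : ℕ} (hn : 2 ≤ n) {u v : Fin n} :
    (cycleGraph n).Adj u v ↔
      ((u : ℕ) + 1 = v ∨ (v : ℕ) + 1 = u ∨
        ((u : ℕ) = 0 ∧ (v : ℕ) = n - 1) ∨ ((v : ℕ) = 0 ∧ (u : ℕ) = n - 1)) := by
  have hu := u.isLt
  have hv := v.isLt
  rw [cycleGraph_adj', Fin.sub_def, Fin.sub_def]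
  simp only [Fin.val_mk]
  rw [nat_cyc_aux hn hu hv, nat_cyc_aux hn hv hu]
  omega

lemma walk_cross {V : Type*} {G : SimpleGraph V} (S : Finset V) {a c : V}
    (w : G.Walk a c) (ha : a ∈ S) (hc : c ∉ S) :
    ∃ e ∈ w.edges, ∃ u v : V, e = s(u, v) ∧ u ∈ S ∧ v ∉ S := by
  induction w with
  | nil => exact absurd ha hc
  | cons h q ih =>
    rename_i x y z
    by_cases hy : y ∈ S
    · obtain ⟨e, he, hprop⟩ := ih hy hc
      exact ⟨e, by simp [Walk.edges_cons, he], hprop⟩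
    · exact ⟨s(x, y), by simp [Walk.edges_cons], x, y, rfl, ha, hy⟩

lemma fin_filter_lt_card {n c : ℕ} (h : c ≤ n) :
    (Finset.univ.filter fun a : Fin n => (a : ℕ) < c).card = c := by
  rw [Finset.card_filter, Fin.sum_univ_eq_sum_range (fun a => if a < c then (1:ℕ) else 0),
    ← Finset.card_filter]
  have : Finset.filter (fun i => i < c) (Finset.range n) = Finset.range c := by
    ext a; simp; omega
  rw [this, Finset.card_range]

lemma fin_filter_pair_card {n c : ℕ} (h2 : 2 ≤ c) (h : c ≤ n) :
    (Finset.univ.filter fun a : Fin n => (a : ℕ) = 0 ∨ (a : ℕ) + 1 = c).card = 2 := by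
  have : (Finset.univ.filter fun a : Fin n => (a : ℕ) = 0 ∨ (a : ℕ) + 1 = c)
      = {(⟨0, by omega⟩ : Fin n), ⟨c - 1, by omega⟩} := by
    ext a
    simp [Fin.ext_iff]
    omega
  rw [this, Finset.card_insert_of_notMem (by simp [Fin.ext_iff]; omega),
    Finset.card_singleton]

lemma edgeCut_le_card_image {V : Type*} [Fintype V] (G : SimpleGraph V) (S : Finset V)
    {α : Type*} (T : Finset α) (g : α → Sym2 V)
    (h : ∀ e, e ∈ G.edgeSet → (∃ u v, e = s(u, v) ∧ u ∈ S ∧ v ∉ S) → ∃ a ∈ T, g a = e) :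
    edgeCut G S ≤ T.card := by
  classical
  unfold edgeCut
  refine le_trans (Finset.card_le_card (?_ : _ ⊆ T.image g)) Finset.card_image_le
  intro e he
  rw [Finset.mem_filter, Set.Finite.mem_toFinset] at he
  exact Finset.mem_image.2 (h e he.1 he.2)

lemma le_edgeCut {V : Type*} [Fintype V] {G : SimpleGraph V} {S : Finset V} {k : ℕ}
    (e : Fin k → Sym2 V) (hmem : ∀ i, e i ∈ G.edgeSet)
    (hcut : ∀ i, ∃ u v, e i = s(u, v) ∧ u ∈ S ∧ v ∉ S)
    (hinj : Function.Injective e) : k ≤ edgeCut G S := by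
  unfold edgeCut
  rw [show k = (Finset.univ : Finset (Fin k)).card by simp]
  exact Finset.card_le_card_of_injOn e
    (fun i _ => by
      rw [Finset.mem_coe, Finset.mem_filter, Set.Finite.mem_toFinset]
      exact ⟨hmem i, hcut i⟩)
    (fun i _ i' _ hee => hinj hee)

/-- For `d ≥ 1` and cycles of lengths `m i ≥ 2d+1`, the subgrid
`C_{2d} □ ⋯ □ C_{2d} □ C_{2d+1}` embedded in the product induces a set `S` of
`(2d)^(d-1)·(2d+1)` vertices with `d(S) < |S|`, so the cut-condition fails and the
product of the cycles is not `(2d)^(d-1)·(2d+1)`-path-pairable. -/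
theorem torusGrid_not_pathPairable (d : ℕ) (hd : 1 ≤ d) (m : Fin d → ℕ)
    (hm : ∀ i, 2 * d + 1 ≤ m i) :
    let S : Finset ((i : Fin d) → Fin (m i)) := Finset.univ.filter
      (fun x => ∀ i : Fin d, (x i : ℕ) < if (i : ℕ) = d - 1 then 2 * d + 1 else 2 * d)
    S.card = (2 * d) ^ (d - 1) * (2 * d + 1) ∧
      edgeCut (torusGrid d m) S < S.card ∧
      ¬ PathPairable (torusGrid d m) ((2 * d) ^ (d - 1) * (2 * d + 1)) := by
  intro S
  set b : Fin d → ℕ := fun i => if (i : ℕ) = d - 1 then 2 * d + 1 else 2 * d with hb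
  have hb_lb : ∀ i, 2 * d ≤ b i := by intro i; simp only [hb]; split <;> omega
  have hb_ub : ∀ i, b i ≤ 2 * d + 1 := by intro i; simp only [hb]; split <;> omega
  have hb2 : ∀ i, 2 ≤ b i := fun i => le_trans (by omega) (hb_lb i)
  have hbm : ∀ i, b i ≤ m i := fun i => le_trans (hb_ub i) (hm i)
  have hm2 : ∀ i, 2 ≤ m i := fun i => le_trans (by omega) (hm i)
  have hSmem : ∀ x : (i : Fin d) → Fin (m i), x ∈ S ↔ ∀ i, (x i : ℕ) < b i := by
    intro x
    simp only [S, Finset.mem_filter, Finset.mem_univ, true_and, hb]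
  set jl : Fin d := ⟨d - 1, by omega⟩ with hjl
  have hbjl : b jl = 2 * d + 1 := by simp [hb, hjl]
  have hbne : ∀ j : Fin d, j ≠ jl → b j = 2 * d := by
    intro j hj
    have : (j : ℕ) ≠ d - 1 := by
      intro h; apply hj; apply Fin.ext; simp [hjl, h]
    simp [hb, this]
  -- cardinality of S
  set t : (i : Fin d) → Finset (Fin (m i)) :=
    fun i => Finset.univ.filter fun a => (a : ℕ) < b i with ht
  have hS_eq : S = Fintype.piFinset t := by
    ext x
    simp only [hSmem, Fintype.mem_piFinset, ht, Finset.mem_filter, Finset.mem_univ, true_and]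
  have hcardS : S.card = ∏ i, b i := by
    rw [hS_eq, Fintype.card_piFinset]
    exact Finset.prod_congr rfl fun i _ => fin_filter_lt_card (hbm i)
  have herase_card : (Finset.univ.erase jl).card = d - 1 := by
    rw [Finset.card_erase_of_mem (Finset.mem_univ _), Finset.card_univ, Fintype.card_fin]
  have hprod_erase : ∀ j : Fin d, b j * ∏ i ∈ Finset.univ.erase j, b i = ∏ i, b i :=
    fun j => Finset.mul_prod_erase _ _ (Finset.mem_univ j)
  have hprod_eq : ∏ i, b i = (2 * d) ^ (d - 1) * (2 * d + 1) := by
    rw [← hprod_erase jl, hbjl, mul_comm]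
    congr 1
    rw [Finset.prod_congr rfl (fun j hj => hbne j (Finset.mem_erase.1 hj).1),
      Finset.prod_const, herase_card]
  have hcard_final : S.card = (2 * d) ^ (d - 1) * (2 * d + 1) := by
    rw [hcardS, hprod_eq]
  -- the edge cut bound
  have hcut_lt : edgeCut (torusGrid d m) S < S.card := by
    have hmpos : ∀ j : Fin d, 0 < m j := fun j => by have := hm2 j; omega
    set g : ((_ : Fin d) × ((i : Fin d) → Fin (m i))) → Sym2 ((i : Fin d) → Fin (m i)) :=
      fun p => s(p.2, Function.update p.2 p.1
        ⟨(if (p.2 p.1 : ℕ) = 0 then m p.1 - 1 else b p.1) % m p.1,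
          Nat.mod_lt _ (hmpos p.1)⟩) with hg
    set T : Finset ((_ : Fin d) × ((i : Fin d) → Fin (m i))) :=
      Finset.univ.sigma (fun j => S.filter fun u => (u j : ℕ) = 0 ∨ (u j : ℕ) + 1 = b j) with hT
    have hsub : ∀ e, e ∈ (torusGrid d m).edgeSet →
        (∃ u v, e = s(u, v) ∧ u ∈ S ∧ v ∉ S) → ∃ a ∈ T, g a = e := by
      intro e he1 he2
      obtain ⟨u, v, rfl, huS, hvS⟩ := he2
      rw [mem_edgeSet, torusGrid, fromRel_adj] at he1
      obtain ⟨hne, hrel⟩ := he1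
      have hrel' : ∃ j, (cycleGraph (m j)).Adj (u j) (v j) ∧ ∀ i, i ≠ j → u i = v i := by
        rcases hrel with ⟨j, ha, hE⟩ | ⟨j, ha, hE⟩
        · exact ⟨j, ha, hE⟩
        · exact ⟨j, ha.symm, fun i hi => (hE i hi).symm⟩
      obtain ⟨j, hadj, heq⟩ := hrel'
      have huj : (u j : ℕ) < b j := (hSmem u).1 huS j
      have hvj : b j ≤ (v j : ℕ) := by
        by_contra hlt
        apply hvS
        rw [hSmem]
        intro i
        by_cases hij : i = j
        · subst hij; omega
        · rw [← heq i hij]; exact (hSmem u).1 huS i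
      rw [cycle_adj_nat (hm2 j)] at hadj
      have hb2j := hb2 j
      have hbmj := hbm j
      have hvlt := (v j).isLt
      have hkey : ((u j : ℕ) + 1 = b j ∧ (v j : ℕ) = b j) ∨
          ((u j : ℕ) = 0 ∧ (v j : ℕ) = m j - 1) := by omega
      refine ⟨⟨j, u⟩, ?_, ?_⟩
      · rw [hT, Finset.mem_sigma, Finset.mem_filter]
        exact ⟨Finset.mem_univ _, huS, show (u j : ℕ) = 0 ∨ (u j : ℕ) + 1 = b j by omega⟩
      · rw [hg]
        show s(u, Function.update u j _) = s(u, v)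
        rw [Sym2.congr_right]
        funext i
        by_cases hij : i = j
        · subst hij
          rw [Function.update_self]
          apply Fin.ext
          show (if (u i : ℕ) = 0 then m i - 1 else b i) % m i = (v i : ℕ)
          rcases hkey with ⟨h1, h2⟩ | ⟨h1, h2⟩
          · rw [if_neg (by omega), Nat.mod_eq_of_lt (by omega)]; omega
          · rw [if_pos h1, Nat.mod_eq_of_lt (by omega)]; omega
        · rw [Function.update_of_ne hij]
          exact heq i hij
    have hTcard : T.card = ∑ j : Fin d, 2 * ∏ i ∈ Finset.univ.erase j, b i := by
      rw [hT, Finset.card_sigma]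
      refine Finset.sum_congr rfl fun j _ => ?_
      have hfe : S.filter (fun u => (u j : ℕ) = 0 ∨ (u j : ℕ) + 1 = b j)
          = Fintype.piFinset (fun i => Finset.univ.filter
              (fun a : Fin (m i) =>
                if i = j then ((a : ℕ) = 0 ∨ (a : ℕ) + 1 = b j) else (a : ℕ) < b i)) := by
        ext x
        rw [Finset.mem_filter, hSmem, Fintype.mem_piFinset]
        simp only [Finset.mem_filter, Finset.mem_univ, true_and]
        constructor
        · rintro ⟨h1, h2⟩ i
          by_cases hij : i = j
          · subst hij; rw [if_pos rfl]; exact h2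
          · rw [if_neg hij]; exact h1 i
        · intro h
          have hj := h j
          rw [if_pos rfl] at hj
          refine ⟨fun i => ?_, hj⟩
          by_cases hij : i = j
          · subst hij; have := hb2 i; omega
          · have := h i; rw [if_neg hij] at this; exact this
      rw [hfe, Fintype.card_piFinset,
        ← Finset.mul_prod_erase Finset.univ _ (Finset.mem_univ j)]
      congr 1
      · have h0 : (Finset.univ.filter (fun a : Fin (m j) =>
            if j = j then ((a : ℕ) = 0 ∨ (a : ℕ) + 1 = b j) else (a : ℕ) < b j))
            = Finset.univ.filter (fun a : Fin (m j) => (a : ℕ) = 0 ∨ (a : ℕ) + 1 = b j) := by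
          simp
        rw [h0]
        exact fin_filter_pair_card (hb2 j) (hbm j)
      · refine Finset.prod_congr rfl fun i hi => ?_
        have hij : i ≠ j := (Finset.mem_erase.1 hi).1
        have h0 : (Finset.univ.filter (fun a : Fin (m i) =>
            if i = j then ((a : ℕ) = 0 ∨ (a : ℕ) + 1 = b j) else (a : ℕ) < b i))
            = Finset.univ.filter (fun a : Fin (m i) => (a : ℕ) < b i) := by
          simp [hij]
        rw [h0]
        exact fin_filter_lt_card (hbm i)
    have hPpos : 0 < ∏ i, b i := Finset.prod_pos fun i _ => lt_of_lt_of_le (by omega) (hb2 i)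
    have hsum : (∑ j : Fin d, 2 * ∏ i ∈ Finset.univ.erase j, b i) * (d * (2 * d + 1))
        = ((d - 1) * (2 * d + 1) + 2 * d) * ∏ i, b i := by
      rw [Finset.sum_mul, ← Finset.sum_erase_add _ _ (Finset.mem_univ jl)]
      have h1 : ∀ j ∈ Finset.univ.erase jl,
          (2 * ∏ i ∈ Finset.univ.erase j, b i) * (d * (2 * d + 1))
            = (2 * d + 1) * ∏ i, b i := by
        intro j hj
        rw [← hprod_erase j, hbne j (Finset.mem_erase.1 hj).1]; ring
      rw [Finset.sum_congr rfl h1, Finset.sum_const, herase_card]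
      have h2 : (2 * ∏ i ∈ Finset.univ.erase jl, b i) * (d * (2 * d + 1))
          = 2 * d * ∏ i, b i := by
        rw [← hprod_erase jl, hbjl]; ring
      rw [h2, smul_eq_mul]; ring
    have hfac : (d - 1) * (2 * d + 1) + 2 * d < d * (2 * d + 1) := by
      obtain ⟨e, rfl⟩ : ∃ e, d = e + 1 := ⟨d - 1, by omega⟩
      simp only [Nat.add_sub_cancel]
      nlinarith
    have hlt : (∑ j : Fin d, 2 * ∏ i ∈ Finset.univ.erase j, b i) < ∏ i, b i := by
      apply Nat.lt_of_mul_lt_mul_right (a := d * (2 * d + 1))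
      rw [hsum]
      calc ((d - 1) * (2 * d + 1) + 2 * d) * ∏ i, b i
          < (d * (2 * d + 1)) * ∏ i, b i := (Nat.mul_lt_mul_right hPpos).mpr hfac
        _ = (∏ i, b i) * (d * (2 * d + 1)) := by ring
    have hlt' : T.card < ∏ i, b i := by rw [hTcard]; exact hlt
    rw [hcardS]
    exact lt_of_le_of_lt (edgeCut_le_card_image _ _ T g hsub) hlt'
  refine ⟨hcard_final, hcut_lt, ?_⟩
  rintro ⟨hk2, hpp⟩
  have hcompl : (2 * d) ^ (d - 1) * (2 * d + 1) ≤ Sᶜ.card := by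
    rw [Finset.card_compl, hcard_final]
    omega
  set k := (2 * d) ^ (d - 1) * (2 * d + 1) with hk
  set ex := S.equivFinOfCardEq hcard_final with hex
  set ey := Sᶜ.equivFinOfCardEq rfl with hey
  set x : Fin k → ((i : Fin d) → Fin (m i)) := fun i => (ex.symm i : _) with hx
  set y : Fin k → ((i : Fin d) → Fin (m i)) :=
    fun i => (ey.symm ⟨(i : ℕ), lt_of_lt_of_le i.isLt hcompl⟩ : _) with hy
  have hxS : ∀ i, x i ∈ S := fun i => (ex.symm i).2
  have hyS : ∀ i, y i ∉ S := fun i =>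
    Finset.mem_compl.1 (ey.symm ⟨(i : ℕ), lt_of_lt_of_le i.isLt hcompl⟩).2
  have hinj : Function.Injective (Sum.elim x y) := by
    rintro (i | i) (i' | i') h <;> simp only [Sum.elim_inl, Sum.elim_inr] at h
    · have : ex.symm i = ex.symm i' := Subtype.ext h
      exact congrArg Sum.inl (ex.symm.injective this)
    · exact absurd (h ▸ hxS i) (hyS i')
    · exact absurd (h.symm ▸ hxS i') (hyS i)
    · have h2 := ey.symm.injective (Subtype.ext h)
      have h3 : (i : ℕ) = (i' : ℕ) := by
        have := congrArg Fin.val h2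
        simpa using this
      exact congrArg Sum.inr (Fin.ext h3)
  obtain ⟨p, hpaths, hdisj⟩ := hpp x y hinj
  choose e hemem hecut using fun i => walk_cross S (p i) (hxS i) (hyS i)
  have hkle : k ≤ edgeCut (torusGrid d m) S :=
    le_edgeCut e (fun i => (p i).edges_subset_edgeSet (hemem i)) hecut
      (fun i i' hee => by
        by_contra hne
        exact hdisj i i' hne (hemem i) (hee ▸ hemem i'))
  rw [hcard_final] at hcut_lt
  omega
end

section
/- Let k ≥ 6 and let G be the graph obtained from the disjoint union of K_{1,k} and K_{k-1} by joining k−1 of the star's leaves to the k−1 vertices of K_{k-1} via a perfect matching, and joining the remaining leaf to an arbitrary vertex of K_{k-1}. Then G satisfies the cut-condition: for every S ⊆ V(G) with |S| ≤ ⌊|V(G)|/2⌋, d(S) ≥ |S|. -/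
open SimpleGraph
open scoped Classical

/-- The graph obtained from the disjoint union of the star `K_{1,k}`
(center `Sum.inl none`, leaves `Sum.inl (some i)`) and the complete graph `K_{k-1}`
(vertices `Sum.inr j`) by matching the leaves `some i` with `i < k-1` to the
vertices of `K_{k-1}` (leaf `i` to vertex `j` with `(i : ℕ) = (j : ℕ)`) and joining
the remaining leaf (`(i : ℕ) = k-1`) to the vertex `w` of `K_{k-1}`. -/
def starMatchedComplete (k : ℕ) (w : Fin (k - 1)) :
    SimpleGraph (Option (Fin k) ⊕ Fin (k - 1)) :=
  SimpleGraph.fromRel (fun x y =>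
    (x = Sum.inl none ∧ ∃ i, y = Sum.inl (some i)) ∨
    (∃ a b : Fin (k - 1), a ≠ b ∧ x = Sum.inr a ∧ y = Sum.inr b) ∨
    (∃ (i : Fin k) (j : Fin (k - 1)), x = Sum.inl (some i) ∧ y = Sum.inr j ∧
      ((i : ℕ) = (j : ℕ) ∨ ((i : ℕ) = k - 1 ∧ j = w))))

namespace SMCaux

variable {k : ℕ} {w : Fin (k - 1)}

abbrev Vt (k : ℕ) := Option (Fin k) ⊕ Fin (k - 1)

lemma adj_center_leaf (i : Fin k) :
    (starMatchedComplete k w).Adj (Sum.inl none) (Sum.inl (some i)) := by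
  rw [starMatchedComplete, SimpleGraph.fromRel_adj]
  exact ⟨by simp, Or.inl (Or.inl ⟨rfl, i, rfl⟩)⟩

lemma adj_clique {a b : Fin (k-1)} (h : a ≠ b) :
    (starMatchedComplete k w).Adj (Sum.inr a) (Sum.inr b) := by
  rw [starMatchedComplete, SimpleGraph.fromRel_adj]
  exact ⟨by simpa using h, Or.inl (Or.inr (Or.inl ⟨a, b, h, rfl, rfl⟩))⟩

lemma adj_match {i : Fin k} {j : Fin (k-1)} (h : (i:ℕ) = (j:ℕ) ∨ ((i:ℕ) = k - 1 ∧ j = w)) :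
    (starMatchedComplete k w).Adj (Sum.inl (some i)) (Sum.inr j) := by
  rw [starMatchedComplete, SimpleGraph.fromRel_adj]
  exact ⟨by simp, Or.inl (Or.inr (Or.inr ⟨i, j, rfl, rfl, h⟩))⟩

def nIdx (k : ℕ) (w : Fin (k - 1)) (i : Fin k) : Fin (k - 1) :=
  if h : (i : ℕ) < k - 1 then ⟨i, h⟩ else w

lemma adj_nIdx (hk : 2 ≤ k) (i : Fin k) :
    (starMatchedComplete k w).Adj (Sum.inl (some i)) (Sum.inr (nIdx k w i)) := by
  unfold nIdx
  split
  · exact adj_match (Or.inl rfl)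
  · refine adj_match (Or.inr ⟨?_, rfl⟩)
    have := i.isLt
    omega

lemma mem_cut {S : Finset (Vt k)} {u v : Vt k}
    (h : (starMatchedComplete k w).Adj u v) (hu : u ∈ S) (hv : v ∉ S) :
    s(u,v) ∈ ((starMatchedComplete k w).edgeSet.toFinite.toFinset.filter
      fun e => ∃ a b, e = s(a,b) ∧ a ∈ S ∧ b ∉ S) := by
  simp only [Finset.mem_filter, Set.Finite.mem_toFinset, mem_edgeSet]
  exact ⟨h, u, v, rfl, hu, hv⟩

lemma mem_cut' {S : Finset (Vt k)} {u v : Vt k}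
    (h : (starMatchedComplete k w).Adj u v) (hu : u ∉ S) (hv : v ∈ S) :
    s(u,v) ∈ ((starMatchedComplete k w).edgeSet.toFinite.toFinset.filter
      fun e => ∃ a b, e = s(a,b) ∧ a ∈ S ∧ b ∉ S) := by
  rw [Sym2.eq_swap]
  exact mem_cut h.symm hv hu

-- injectivity helpers
lemma inj_star :
    Function.Injective (fun i : Fin k => s((Sum.inl none : Vt k), Sum.inl (some i))) := by
  intro x y h
  rw [Sym2.eq_iff] at h
  rcases h with ⟨h1, h2⟩ | ⟨h1, h2⟩ <;> simp_all

lemma inj_star' :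
    Function.Injective (fun i : Fin k => s((Sum.inl (some i) : Vt k), Sum.inl none)) := by
  intro x y h
  rw [Sym2.eq_iff] at h
  rcases h with ⟨h1, h2⟩ | ⟨h1, h2⟩ <;> simp_all

lemma inj_match (w : Fin (k-1)) :
    Function.Injective
      (fun i : Fin k => s((Sum.inl (some i) : Vt k), Sum.inr (nIdx k w i))) := by
  intro x y h
  rw [Sym2.eq_iff] at h
  rcases h with ⟨h1, h2⟩ | ⟨h1, h2⟩ <;> simp_all

lemma inj_cliq (z : Fin (k-1)) :
    Function.Injective (fun j : Fin (k-1) => s((Sum.inr j : Vt k), Sum.inr z)) := by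
  intro x y h
  rw [Sym2.eq_iff] at h
  rcases h with ⟨h1, h2⟩ | ⟨h1, h2⟩ <;> simp_all

-- edge-shape inequality helpers
lemma ne_cliq_match (j z : Fin (k-1)) (i : Fin k) (j' : Fin (k-1)) :
    s((Sum.inr j : Vt k), Sum.inr z) ≠ s(Sum.inl (some i), Sum.inr j') := by
  intro h
  rw [Sym2.eq_iff] at h
  rcases h with ⟨h1, h2⟩ | ⟨h1, h2⟩ <;> simp_all

lemma ne_cliq_star (j z : Fin (k-1)) (t : Fin k) :
    s((Sum.inr j : Vt k), Sum.inr z) ≠ s(Sum.inl none, Sum.inl (some t)) := by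
  intro h
  rw [Sym2.eq_iff] at h
  rcases h with ⟨h1, h2⟩ | ⟨h1, h2⟩ <;> simp_all

lemma ne_match_star (i : Fin k) (j' : Fin (k-1)) (t : Fin k) :
    s((Sum.inl (some i) : Vt k), Sum.inr j') ≠ s(Sum.inl none, Sum.inl (some t)) := by
  intro h
  rw [Sym2.eq_iff] at h
  rcases h with ⟨h1, h2⟩ | ⟨h1, h2⟩ <;> simp_all

lemma ne_star'_match (i : Fin k) (t : Fin k) (j' : Fin (k-1)) :
    s((Sum.inl (some i) : Vt k), Sum.inl none) ≠ s(Sum.inl (some t), Sum.inr j') := by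
  intro h
  rw [Sym2.eq_iff] at h
  rcases h with ⟨h1, h2⟩ | ⟨h1, h2⟩ <;> simp_all

lemma ne_star'_cliq (i : Fin k) (j z : Fin (k-1)) :
    s((Sum.inl (some i) : Vt k), Sum.inl none) ≠ s(Sum.inr j, Sum.inr z) := by
  intro h
  rw [Sym2.eq_iff] at h
  rcases h with ⟨h1, h2⟩ | ⟨h1, h2⟩ <;> simp_all

lemma eq_cliq_cliq {j z j' z' : Fin (k-1)}
    (h : s((Sum.inr j : Vt k), Sum.inr z) = s(Sum.inr j', Sum.inr z')) :
    (j = j' ∧ z = z') ∨ (j = z' ∧ z = j') := by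
  rw [Sym2.eq_iff] at h
  rcases h with ⟨h1, h2⟩ | ⟨h1, h2⟩
  · exact Or.inl ⟨by simpa using h1, by simpa using h2⟩
  · exact Or.inr ⟨by simpa using h1, by simpa using h2⟩

end SMCaux

open SMCaux



set_option maxHeartbeats 1000000

/-- For `k ≥ 6`, the graph obtained from `K_{1,k}` and `K_{k-1}` by the matching
construction satisfies the cut-condition: every set `S` of at most half of the
`2k` vertices has `d(S) ≥ |S|`. -/
theorem starMatchedComplete_cut_condition (k : ℕ) (hk : 6 ≤ k) (w : Fin (k - 1)) :
    ∀ S : Finset (Option (Fin k) ⊕ Fin (k - 1)),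
      S.card ≤ Fintype.card (Option (Fin k) ⊕ Fin (k - 1)) / 2 →
      S.card ≤ edgeCut (starMatchedComplete k w) S := by
  intro S hS
  have hk2 : 2 ≤ k := by omega
  have hV : Fintype.card (Option (Fin k) ⊕ Fin (k - 1)) = 2 * k := by
    simp only [Fintype.card_sum, Fintype.card_option, Fintype.card_fin]
    omega
  rw [hV] at hS
  have hSk : S.card ≤ k := by omega
  set SL : Finset (Fin k) := Finset.univ.filter (fun i => Sum.inl (some i) ∈ S) with hSLdef
  set SC : Finset (Fin (k-1)) := Finset.univ.filter (fun j => Sum.inr j ∈ S) with hSCdef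
  have hmemL : ∀ i : Fin k, Sum.inl (some i) ∈ S ↔ i ∈ SL := by
    intro i; rw [hSLdef, Finset.mem_filter]; simp
  have hmemC : ∀ j : Fin (k-1), Sum.inr j ∈ S ↔ j ∈ SC := by
    intro j; rw [hSCdef, Finset.mem_filter]; simp
  have haL : SL.card ≤ k := by
    simpa using Finset.card_le_card (Finset.subset_univ SL)
  have hbC : SC.card ≤ k - 1 := by
    simpa using Finset.card_le_card (Finset.subset_univ SC)
  -- decomposition of S.card
  have hdecomp : S = ((if Sum.inl none ∈ S then ({Sum.inl none} : Finset (Option (Fin k) ⊕ Fin (k-1))) else ∅)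
      ∪ SL.image (fun i => Sum.inl (some i))) ∪ SC.image Sum.inr := by
    ext x
    rcases x with (_|i) | j
    · by_cases hc : (Sum.inl none : Option (Fin k) ⊕ Fin (k-1)) ∈ S <;> simp [hc]
    · by_cases hc : (Sum.inl none : Option (Fin k) ⊕ Fin (k-1)) ∈ S <;>
        simp [hc, hSLdef]
    · by_cases hc : (Sum.inl none : Option (Fin k) ⊕ Fin (k-1)) ∈ S <;>
        simp [hc, hSCdef]
  have hdisj1 : Disjoint (if Sum.inl none ∈ S then ({Sum.inl none} : Finset (Option (Fin k) ⊕ Fin (k-1))) else ∅)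
      (SL.image (fun i => Sum.inl (some i))) := by
    split
    · rw [Finset.disjoint_left]
      rintro x hx hx'
      rw [Finset.mem_singleton] at hx
      subst hx
      simp only [Finset.mem_image] at hx'
      obtain ⟨i, -, h⟩ := hx'
      simp at h
    · simp
  have hdisj2 : Disjoint ((if Sum.inl none ∈ S then ({Sum.inl none} : Finset (Option (Fin k) ⊕ Fin (k-1))) else ∅)
      ∪ SL.image (fun i => Sum.inl (some i))) (SC.image Sum.inr) := by
    rw [Finset.disjoint_left]
    rintro x hx hx'
    simp only [Finset.mem_image] at hx'
    obtain ⟨j, -, rfl⟩ := hx'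
    rcases Finset.mem_union.1 hx with h | h
    · split at h
      · rw [Finset.mem_singleton] at h
        simp at h
      · simp at h
    · simp only [Finset.mem_image] at h
      obtain ⟨i, -, h⟩ := h
      simp at h
  have hScard : S.card = (if Sum.inl none ∈ S then 1 else 0) + SL.card + SC.card := by
    rw [hdecomp, Finset.card_union_of_disjoint hdisj2, Finset.card_union_of_disjoint hdisj1,
      Finset.card_image_of_injective _ (fun a b h => by simpa using h : Function.Injective
        (fun i : Fin k => (Sum.inl (some i) : Option (Fin k) ⊕ Fin (k-1)))),
      Finset.card_image_of_injective _ Sum.inr_injective]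
    congr 1
    congr 1
    split <;> simp
  set cutF := ((starMatchedComplete k w).edgeSet.toFinite.toFinset.filter
      fun e => ∃ a b, e = s(a,b) ∧ a ∈ S ∧ b ∉ S) with hcutF
  have key : ∀ T : Finset (Sym2 (Option (Fin k) ⊕ Fin (k-1))), T ⊆ cutF →
      T.card ≤ edgeCut (starMatchedComplete k w) S := by
    intro T hT
    unfold edgeCut
    apply Finset.card_le_card
    intro e he
    have h2 := hT he
    rw [hcutF] at h2
    simp only [Finset.mem_filter, Set.Finite.mem_toFinset] at h2 ⊢
    exact h2
  by_cases hc : (Sum.inl none : Option (Fin k) ⊕ Fin (k-1)) ∈ S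
  · -- center in S
    rw [if_pos hc] at hScard
    set Gd : Finset (Fin k) := SL.filter (fun i => Sum.inr (nIdx k w i) ∉ S) with hGddef
    set Bd : Finset (Fin k) := SL.filter (fun i => Sum.inr (nIdx k w i) ∈ S) with hBddef
    have hmemG : ∀ i : Fin k, i ∈ Gd ↔ (i ∈ SL ∧ Sum.inr (nIdx k w i) ∉ S) := by
      intro i; rw [hGddef, Finset.mem_filter]
    have hmemB : ∀ i : Fin k, i ∈ Bd ↔ (i ∈ SL ∧ Sum.inr (nIdx k w i) ∈ S) := by
      intro i; rw [hBddef, Finset.mem_filter]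
    have hgm : Bd.card + Gd.card = SL.card := by
      rw [hBddef, hGddef]
      exact Finset.card_filter_add_card_filter_not
          (s := SL) (fun i => Sum.inr (nIdx k w i) ∈ S)
    have hBd1 : Bd.card ≤ SC.card + 1 := by
      have h1 : (Bd.filter (fun i : Fin k => (i:ℕ) < k - 1)).card ≤ SC.card := by
        apply Finset.card_le_card_of_injOn (fun i => nIdx k w i)
        · intro i hi
          rw [Finset.mem_coe, Finset.mem_filter] at hi
          exact (hmemC _).1 ((hmemB i).1 hi.1).2
        · intro x hx y hy hxy
          rw [Finset.coe_filter, Set.mem_setOf_eq] at hx hy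
          simp only [nIdx, dif_pos hx.2, dif_pos hy.2] at hxy
          exact Fin.ext (by simpa using congrArg Fin.val hxy)
      have h2 : (Bd.filter (fun i : Fin k => ¬ (i:ℕ) < k - 1)).card ≤ 1 := by
        apply Finset.card_le_one.2
        intro x hx y hy
        rw [Finset.mem_filter] at hx hy
        have := x.isLt; have := y.isLt
        exact Fin.ext (by omega)
      have h3 := Finset.card_filter_add_card_filter_not
          (s := Bd) (fun i : Fin k => (i:ℕ) < k-1)
      omega
    have hBd0 : SC.card = 0 → Bd.card = 0 := by
      intro h0
      rw [Finset.card_eq_zero] at h0 ⊢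
      ext i
      simp only [Finset.notMem_empty, iff_false]
      intro hmem
      have h4 : nIdx k w i ∈ SC := (hmemC _).1 ((hmemB i).1 hmem).2
      rw [h0] at h4
      exact Finset.notMem_empty _ h4
    by_cases hb : SC = Finset.univ
    · -- whole clique in S; then SL is empty
      have hbcard : SC.card = k - 1 := by rw [hb]; simp
      have ha0 : SL.card = 0 := by omega
      have hSLempty : SL = ∅ := Finset.card_eq_zero.1 ha0
      set T : Finset (Sym2 (Option (Fin k) ⊕ Fin (k-1))) :=
        Finset.univ.image (fun i : Fin k => s(Sum.inl none, Sum.inl (some i))) with hT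
      have hTsub : T ⊆ cutF := by
        intro e he
        rw [hT, Finset.mem_image] at he
        obtain ⟨i, -, rfl⟩ := he
        refine mem_cut (adj_center_leaf i) hc ?_
        rw [hmemL, hSLempty]
        exact Finset.notMem_empty _
      have hTcard : T.card = k := by
        rw [hT, Finset.card_image_of_injective _ inj_star, Finset.card_univ, Fintype.card_fin]
      calc S.card ≤ k := hSk
        _ = T.card := hTcard.symm
        _ ≤ edgeCut (starMatchedComplete k w) S := key _ hTsub
    · -- there is z outside SC
      obtain ⟨z, hz⟩ : ∃ z, z ∉ SC := by
        by_contra h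
        push_neg at h
        exact hb (Finset.eq_univ_iff_forall.2 h)
      have hzS : Sum.inr z ∉ S := fun h => hz ((hmemC z).1 h)
      set T2 : Finset (Sym2 (Option (Fin k) ⊕ Fin (k-1))) :=
        SC.image (fun j => s(Sum.inr j, Sum.inr z)) with hT2
      set T3 : Finset (Sym2 (Option (Fin k) ⊕ Fin (k-1))) :=
        Gd.image (fun i => s(Sum.inl (some i), Sum.inr (nIdx k w i))) with hT3
      set T4 : Finset (Sym2 (Option (Fin k) ⊕ Fin (k-1))) :=
        SLᶜ.image (fun t => s(Sum.inl none, Sum.inl (some t))) with hT4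
      have hT2sub : T2 ⊆ cutF := by
        intro e he
        rw [hT2, Finset.mem_image] at he
        obtain ⟨j, hj, rfl⟩ := he
        exact mem_cut (adj_clique (fun h => hz (h ▸ hj))) ((hmemC j).2 hj) hzS
      have hT3sub : T3 ⊆ cutF := by
        intro e he
        rw [hT3, Finset.mem_image] at he
        obtain ⟨i, hi, rfl⟩ := he
        obtain ⟨hi1, hi2⟩ := (hmemG i).1 hi
        exact mem_cut (adj_nIdx hk2 i) ((hmemL i).2 hi1) hi2
      have hT4sub : T4 ⊆ cutF := by
        intro e he
        rw [hT4, Finset.mem_image] at he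
        obtain ⟨t, ht, rfl⟩ := he
        rw [Finset.mem_compl] at ht
        exact mem_cut (adj_center_leaf t) hc (fun h => ht ((hmemL t).1 h))
      have hT2card : T2.card = SC.card := by
        rw [hT2, Finset.card_image_of_injective _ (inj_cliq z)]
      have hT3card : T3.card = Gd.card := by
        rw [hT3, Finset.card_image_of_injective _ (inj_match w)]
      have hT4card : T4.card = k - SL.card := by
        rw [hT4, Finset.card_image_of_injective _ inj_star, Finset.card_compl]
        simp
      have hd23 : Disjoint T2 T3 := by
        rw [Finset.disjoint_left]
        rintro e he he'
        rw [hT2, Finset.mem_image] at he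
        rw [hT3, Finset.mem_image] at he'
        obtain ⟨j, -, rfl⟩ := he
        obtain ⟨i, -, h⟩ := he'
        exact ne_cliq_match _ _ _ _ h.symm
      have hd24 : Disjoint T2 T4 := by
        rw [Finset.disjoint_left]
        rintro e he he'
        rw [hT2, Finset.mem_image] at he
        rw [hT4, Finset.mem_image] at he'
        obtain ⟨j, -, rfl⟩ := he
        obtain ⟨t, -, h⟩ := he'
        exact ne_cliq_star _ _ _ h.symm
      have hd34 : Disjoint T3 T4 := by
        rw [Finset.disjoint_left]
        rintro e he he'
        rw [hT3, Finset.mem_image] at he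
        rw [hT4, Finset.mem_image] at he'
        obtain ⟨i, -, rfl⟩ := he
        obtain ⟨t, -, h⟩ := he'
        exact ne_match_star _ _ _ h.symm
      have hcard234 : (T2 ∪ T3 ∪ T4).card = SC.card + Gd.card + (k - SL.card) := by
        rw [Finset.card_union_of_disjoint, Finset.card_union_of_disjoint hd23,
          hT2card, hT3card, hT4card]
        exact Finset.disjoint_union_left.2 ⟨hd24, hd34⟩
      by_cases hcase : S.card ≤ SC.card + Gd.card + (k - SL.card)
      · calc S.card ≤ (T2 ∪ T3 ∪ T4).card := by rw [hcard234]; exact hcase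
          _ ≤ edgeCut (starMatchedComplete k w) S := key _
              (Finset.union_subset (Finset.union_subset hT2sub hT3sub) hT4sub)
      · push_neg at hcase
        have hb1 : 1 ≤ SC.card := by omega
        have hz2 : 1 < SCᶜ.card := by
          rw [Finset.card_compl, Fintype.card_fin]
          omega
        obtain ⟨z', hz'mem, hz'ne⟩ := Finset.exists_mem_ne hz2 z
        have hz' : z' ∉ SC := Finset.mem_compl.1 hz'mem
        have hz'S : Sum.inr z' ∉ S := fun h => hz' ((hmemC z').1 h)
        obtain ⟨j0, hj0⟩ := Finset.card_pos.1 hb1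
        set T5 : Finset (Sym2 (Option (Fin k) ⊕ Fin (k-1))) :=
          {s(Sum.inr j0, Sum.inr z')} with hT5
        have hT5sub : T5 ⊆ cutF := by
          intro e he
          rw [hT5, Finset.mem_singleton] at he
          subst he
          exact mem_cut (adj_clique (fun h => hz' (h ▸ hj0))) ((hmemC j0).2 hj0) hz'S
        have hd25 : Disjoint T2 T5 := by
          rw [Finset.disjoint_left]
          rintro e he he'
          rw [hT2, Finset.mem_image] at he
          rw [hT5, Finset.mem_singleton] at he'
          obtain ⟨j, hj, rfl⟩ := he
          rcases eq_cliq_cliq he' with ⟨h1, h2⟩ | ⟨h1, h2⟩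
          · exact hz'ne h2.symm
          · exact hz' (h1 ▸ hj)
        have hd35 : Disjoint T3 T5 := by
          rw [Finset.disjoint_left]
          rintro e he he'
          rw [hT3, Finset.mem_image] at he
          rw [hT5, Finset.mem_singleton] at he'
          obtain ⟨i, -, rfl⟩ := he
          exact ne_cliq_match _ _ _ _ he'.symm
        have hd45 : Disjoint T4 T5 := by
          rw [Finset.disjoint_left]
          rintro e he he'
          rw [hT4, Finset.mem_image] at he
          rw [hT5, Finset.mem_singleton] at he'
          obtain ⟨t, -, rfl⟩ := he
          exact ne_cliq_star _ _ _ he'.symm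
        have hcard2345 : (T2 ∪ T3 ∪ T4 ∪ T5).card
            = SC.card + Gd.card + (k - SL.card) + 1 := by
          rw [Finset.card_union_of_disjoint, hcard234, hT5, Finset.card_singleton]
          exact Finset.disjoint_union_left.2
            ⟨Finset.disjoint_union_left.2 ⟨hd25, hd35⟩, hd45⟩
        have hfinal : S.card ≤ SC.card + Gd.card + (k - SL.card) + 1 := by omega
        calc S.card ≤ (T2 ∪ T3 ∪ T4 ∪ T5).card := by rw [hcard2345]; exact hfinal
          _ ≤ edgeCut (starMatchedComplete k w) S := key _
              (Finset.union_subset (Finset.union_subset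
                (Finset.union_subset hT2sub hT3sub) hT4sub) hT5sub)
  · -- center not in S
    rw [if_neg hc] at hScard
    set T1 : Finset (Sym2 (Option (Fin k) ⊕ Fin (k-1))) :=
      SL.image (fun i => s(Sum.inl (some i), Sum.inl none)) with hT1
    have hT1sub : T1 ⊆ cutF := by
      intro e he
      rw [hT1, Finset.mem_image] at he
      obtain ⟨i, hi, rfl⟩ := he
      exact mem_cut (adj_center_leaf i).symm ((hmemL i).2 hi) hc
    have hT1card : T1.card = SL.card := by
      rw [hT1, Finset.card_image_of_injective _ inj_star']
    by_cases hb : SC = Finset.univ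
    · -- whole clique in S
      set T2 : Finset (Sym2 (Option (Fin k) ⊕ Fin (k-1))) :=
        SLᶜ.image (fun i => s(Sum.inl (some i), Sum.inr (nIdx k w i))) with hT2
      have hT2sub : T2 ⊆ cutF := by
        intro e he
        rw [hT2, Finset.mem_image] at he
        obtain ⟨i, hi, rfl⟩ := he
        rw [Finset.mem_compl] at hi
        refine mem_cut' (adj_nIdx hk2 i) (fun h => hi ((hmemL i).1 h)) ?_
        rw [hmemC, hb]
        exact Finset.mem_univ _
      have hT2card : T2.card = k - SL.card := by
        rw [hT2, Finset.card_image_of_injective _ (inj_match w), Finset.card_compl]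
        simp
      have hd12 : Disjoint T1 T2 := by
        rw [Finset.disjoint_left]
        rintro e he he'
        rw [hT1, Finset.mem_image] at he
        rw [hT2, Finset.mem_image] at he'
        obtain ⟨i, -, rfl⟩ := he
        obtain ⟨t, -, h⟩ := he'
        exact ne_star'_match _ _ _ h.symm
      have hcard12 : (T1 ∪ T2).card = SL.card + (k - SL.card) := by
        rw [Finset.card_union_of_disjoint hd12, hT1card, hT2card]
      calc S.card ≤ SL.card + (k - SL.card) := by omega
        _ = (T1 ∪ T2).card := hcard12.symm
        _ ≤ edgeCut (starMatchedComplete k w) S := key _ (Finset.union_subset hT1sub hT2sub)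
    · obtain ⟨z, hz⟩ : ∃ z, z ∉ SC := by
        by_contra h
        push_neg at h
        exact hb (Finset.eq_univ_iff_forall.2 h)
      have hzS : Sum.inr z ∉ S := fun h => hz ((hmemC z).1 h)
      set T2 : Finset (Sym2 (Option (Fin k) ⊕ Fin (k-1))) :=
        SC.image (fun j => s(Sum.inr j, Sum.inr z)) with hT2
      have hT2sub : T2 ⊆ cutF := by
        intro e he
        rw [hT2, Finset.mem_image] at he
        obtain ⟨j, hj, rfl⟩ := he
        exact mem_cut (adj_clique (fun h => hz (h ▸ hj))) ((hmemC j).2 hj) hzS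
      have hT2card : T2.card = SC.card := by
        rw [hT2, Finset.card_image_of_injective _ (inj_cliq z)]
      have hd12 : Disjoint T1 T2 := by
        rw [Finset.disjoint_left]
        rintro e he he'
        rw [hT1, Finset.mem_image] at he
        rw [hT2, Finset.mem_image] at he'
        obtain ⟨i, -, rfl⟩ := he
        obtain ⟨j, -, h⟩ := he'
        exact ne_star'_cliq _ _ _ h.symm
      have hcard12 : (T1 ∪ T2).card = SL.card + SC.card := by
        rw [Finset.card_union_of_disjoint hd12, hT1card, hT2card]
      calc S.card = SL.card + SC.card := by omega
        _ = (T1 ∪ T2).card := hcard12.symm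
        _ ≤ edgeCut (starMatchedComplete k w) S := key _ (Finset.union_subset hT1sub hT2sub)
end

section
/- Let k ≥ 6 and let G be the graph obtained from the disjoint union of K_{1,k} and K_{k-1} by joining k−1 of the star's leaves to the k−1 vertices of K_{k-1} via a perfect matching and joining the remaining leaf to a vertex of K_{k-1}. Then G is not path-pairable (not k-path-pairable), although it satisfies the cut-condition. -/
open SimpleGraph
open scoped Classical

lemma arith (k a u l q t r : ℕ) (ha : a ≤ 1) (hu : u ≤ 1) (huq : u ≤ q)
    (htl : t ≤ l) (hlk : l ≤ k) (htr : t + r = q + u) (hcard : a + l + q ≤ k)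
    (hq1 : q ≤ k - 1) (hq2 : q ≤ k - 2 + u) (hk : 6 ≤ k) :
    a + l + q ≤ a * (k - l) + (1 - a) * l + q * (k - 1 - q) + (l - t) + r := by
  rcases Nat.eq_zero_or_pos q with rfl | hq
  · interval_cases a <;> omega
  · rcases Nat.lt_or_ge q (k - 1) with h | h
    · have hP1 : q ≤ q * (k - 1 - q) := by
        calc q = q * 1 := (Nat.mul_one q).symm
        _ ≤ q * (k - 1 - q) := Nat.mul_le_mul_left q (by omega)
      have hP2 : k - 1 - q ≤ q * (k - 1 - q) := Nat.le_mul_of_pos_left _ hq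
      interval_cases a <;> omega
    · have hq' : q = k - 1 := le_antisymm hq1 h
      have hz : q * (k - 1 - q) = 0 := by rw [hq', Nat.sub_self, Nat.mul_zero]
      interval_cases a <;> omega


namespace SMC



variable {k : ℕ} (w : Fin (k - 1))

/-- the clique neighbour of leaf `i` -/
def mt (w : Fin (k-1)) (i : Fin k) : Fin (k - 1) :=
  if h : (i : ℕ) < k - 1 then ⟨i, h⟩ else w

lemma adj_center_leaf (i : Fin k) :
    (starMatchedComplete k w).Adj (Sum.inl none) (Sum.inl (some i)) := by
  rw [starMatchedComplete, fromRel_adj]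
  exact ⟨by simp, Or.inl (Or.inl ⟨rfl, i, rfl⟩)⟩

lemma adj_leaf_mt (i : Fin k) :
    (starMatchedComplete k w).Adj (Sum.inl (some i)) (Sum.inr (mt w i)) := by
  rw [starMatchedComplete, fromRel_adj]
  refine ⟨by simp, Or.inl (Or.inr (Or.inr ⟨i, mt w i, rfl, rfl, ?_⟩))⟩
  unfold mt
  split_ifs with h
  · exact Or.inl rfl
  · exact Or.inr ⟨by omega, rfl⟩

lemma adj_clique {a b : Fin (k-1)} (hab : a ≠ b) :
    (starMatchedComplete k w).Adj (Sum.inr a) (Sum.inr b) := by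
  rw [starMatchedComplete, fromRel_adj]
  exact ⟨by simpa using hab, Or.inl (Or.inr (Or.inl ⟨a, b, hab, rfl, rfl⟩))⟩

lemma center_nbr {v} (h : (starMatchedComplete k w).Adj (Sum.inl none) v) :
    ∃ i, v = Sum.inl (some i) := by
  rw [starMatchedComplete, fromRel_adj] at h
  rcases h with ⟨-, h | h⟩
  · rcases h with ⟨-, i, rfl⟩ | ⟨a, b, -, h, -⟩ | ⟨i, j, h, -⟩
    · exact ⟨i, rfl⟩
    · exact absurd h (by simp)
    · exact absurd h (by simp)
  · rcases h with ⟨-, i, h⟩ | ⟨a, b, -, -, h⟩ | ⟨i, j, -, h, -⟩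
    · exact absurd h (by simp)
    · exact absurd h (by simp)
    · exact absurd h (by simp)

lemma mt_eq_of_lt {i : Fin k} (h : (i : ℕ) < k - 1) : mt w i = ⟨i, h⟩ := dif_pos h

lemma mt_eq_of_not_lt {i : Fin k} (h : ¬ (i : ℕ) < k - 1) : mt w i = w := dif_neg h

lemma leaf_nbr {i : Fin k} {v} (h : (starMatchedComplete k w).Adj (Sum.inl (some i)) v) :
    v = Sum.inl none ∨ v = Sum.inr (mt w i) := by
  have hik : (i : ℕ) < k := i.2
  rw [starMatchedComplete, fromRel_adj] at h
  rcases h with ⟨-, h | h⟩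
  · rcases h with ⟨h, -⟩ | ⟨a, b, -, h, -⟩ | ⟨i', j, hi', rfl, hj⟩
    · exact absurd h (by simp)
    · exact absurd h (by simp)
    · obtain hii : i = i' := by simpa using hi'
      cases hii
      refine Or.inr ?_
      rcases hj with hj | ⟨hj, hj2⟩
      · have hlt : (i : ℕ) < k - 1 := hj ▸ j.2
        rw [mt_eq_of_lt w hlt]
        exact congrArg Sum.inr (Fin.ext hj.symm)
      · rw [mt_eq_of_not_lt w (by omega)]
        exact congrArg Sum.inr hj2
  · rcases h with ⟨h, -⟩ | ⟨a, b, -, -, h⟩ | ⟨i', j, -, hj, -⟩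
    · exact Or.inl h
    · exact absurd h (by simp)
    · exact absurd hj (by simp)



lemma card_le_edgeCut {V : Type*} [Fintype V] (G : SimpleGraph V) (S : Finset V)
    (D : Finset (V × V)) (hD : ∀ p ∈ D, G.Adj p.1 p.2 ∧ p.1 ∈ S ∧ p.2 ∉ S) :
    D.card ≤ edgeCut G S := by
  classical
  apply Finset.card_le_card_of_injOn (fun p => s(p.1, p.2))
  · intro p hp
    obtain ⟨hadj, h1, h2⟩ := hD p hp
    rw [Finset.mem_coe, Finset.mem_filter]
    exact ⟨by simpa [Set.Finite.mem_toFinset] using hadj, p.1, p.2, rfl, h1, h2⟩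
  · intro p hp q hq h
    obtain ⟨_, hp1, hp2⟩ := hD p hp
    obtain ⟨_, hq1, hq2⟩ := hD q hq
    simp only [Sym2.eq_iff] at h
    rcases h with ⟨h1, h2⟩ | ⟨h1, h2⟩
    · exact Prod.ext h1 h2
    · exact absurd (h2 ▸ hq1) hp2


lemma M_card (hk : 6 ≤ k) (S : Finset (Option (Fin k) ⊕ Fin (k-1))) :
    (Finset.univ.filter (fun i : Fin k => Sum.inr (mt w i) ∈ S)).card
      = (Finset.univ.filter (fun j : Fin (k-1) => (Sum.inr j : Option (Fin k) ⊕ Fin (k-1)) ∈ S)).card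
        + (if (Sum.inr w : Option (Fin k) ⊕ Fin (k-1)) ∈ S then 1 else 0) := by
  classical
  have hqimg : Finset.univ.filter (fun i : Fin k => Sum.inr (mt w i) ∈ S)
      = (Finset.univ.filter (fun j : Fin (k-1) => (Sum.inr j : Option (Fin k) ⊕ Fin (k-1)) ∈ S)).image
          (fun j => (⟨j.val, by have := j.2; omega⟩ : Fin k))
        ∪ (if (Sum.inr w : Option (Fin k) ⊕ Fin (k-1)) ∈ S then {(⟨k-1, by omega⟩ : Fin k)} else ∅) := by
    ext i
    simp only [Finset.mem_filter, Finset.mem_univ, true_and, Finset.mem_union, Finset.mem_image]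
    constructor
    · intro hm
      by_cases hlt : (i : ℕ) < k - 1
      · left
        exact ⟨mt w i, hm, by rw [mt_eq_of_lt w hlt]⟩
      · right
        rw [mt_eq_of_not_lt w hlt] at hm
        rw [if_pos hm]
        exact Finset.mem_singleton.mpr (Fin.ext (show (i : ℕ) = k - 1 by have := i.2; omega))
    · rintro (⟨j, hj, rfl⟩ | h)
      · have hmt : mt w (⟨j.val, by have := j.2; omega⟩ : Fin k) = j :=
          (mt_eq_of_lt w (show ((⟨j.val, by have := j.2; omega⟩ : Fin k) : ℕ) < k - 1 from j.2)).trans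
            (Fin.ext rfl)
        rw [hmt]
        exact hj
      · split_ifs at h with hw
        · rw [Finset.mem_singleton] at h
          subst h
          rw [mt_eq_of_not_lt w (by simp)]
          exact hw
        · exact absurd h (Finset.notMem_empty _)
  rw [hqimg, Finset.card_union_of_disjoint, Finset.card_image_of_injOn]
  · congr 1
    split_ifs <;> simp
  · intro a _ b _ hab
    simp only [Fin.mk.injEq] at hab
    exact Fin.ext hab
  · rw [Finset.disjoint_left]
    intro a ha hb
    rw [Finset.mem_image] at ha
    obtain ⟨j, -, rfl⟩ := ha
    split_ifs at hb with hw
    · rw [Finset.mem_singleton] at hb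
      have hval : (j : ℕ) = k - 1 := congrArg Fin.val hb
      have := j.2
      omega
    · exact absurd hb (Finset.notMem_empty _)

lemma card_split (k : ℕ) (S : Finset (Option (Fin k) ⊕ Fin (k-1))) :
    S.card = (if (Sum.inl none : Option (Fin k) ⊕ Fin (k-1)) ∈ S then 1 else 0)
      + (Finset.univ.filter (fun i : Fin k => (Sum.inl (some i) : Option (Fin k) ⊕ Fin (k-1)) ∈ S)).card
      + (Finset.univ.filter (fun j : Fin (k-1) => (Sum.inr j : Option (Fin k) ⊕ Fin (k-1)) ∈ S)).card := by
  classical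
  have t1 := Finset.card_filter_add_card_filter_not (s := S)
    (p := fun v => ∃ j : Fin (k-1), v = Sum.inr j)
  have t2 := Finset.card_filter_add_card_filter_not
    (s := S.filter (fun v => ¬ ∃ j : Fin (k-1), v = Sum.inr j)) (p := fun v => v = Sum.inl none)
  have e1 : S.filter (fun v => ∃ j : Fin (k-1), v = Sum.inr j)
      = (Finset.univ.filter (fun j : Fin (k-1) => (Sum.inr j : Option (Fin k) ⊕ Fin (k-1)) ∈ S)).image Sum.inr := by
    ext v
    cases v with
    | inl o => simp
    | inr j => simp
  have e2 : (S.filter (fun v => ¬ ∃ j : Fin (k-1), v = Sum.inr j)).filter (fun v => v = Sum.inl none)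
      = if (Sum.inl none : Option (Fin k) ⊕ Fin (k-1)) ∈ S then {Sum.inl none} else ∅ := by
    split_ifs with hc
    · ext v
      simp only [Finset.mem_filter, Finset.mem_singleton]
      constructor
      · tauto
      · rintro rfl; exact ⟨⟨hc, by simp⟩, rfl⟩
    · ext v
      simp only [Finset.mem_filter, Finset.notMem_empty, iff_false]
      rintro ⟨⟨hv, -⟩, rfl⟩
      exact hc hv
  have e3 : (S.filter (fun v => ¬ ∃ j : Fin (k-1), v = Sum.inr j)).filter (fun v => ¬ v = Sum.inl none)
      = (Finset.univ.filter (fun i : Fin k => (Sum.inl (some i) : Option (Fin k) ⊕ Fin (k-1)) ∈ S)).image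
          (fun i => Sum.inl (some i)) := by
    ext v
    rcases v with o | j
    · rcases o with _ | i
      · simp
      · simp
    · simp
  have c1 : (S.filter (fun v => ∃ j : Fin (k-1), v = Sum.inr j)).card
      = (Finset.univ.filter (fun j : Fin (k-1) => (Sum.inr j : Option (Fin k) ⊕ Fin (k-1)) ∈ S)).card := by
    rw [e1, Finset.card_image_of_injective _ Sum.inr_injective]
  have c2 : ((S.filter (fun v => ¬ ∃ j : Fin (k-1), v = Sum.inr j)).filter (fun v => v = Sum.inl none)).card
      = (if (Sum.inl none : Option (Fin k) ⊕ Fin (k-1)) ∈ S then 1 else 0) := by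
    rw [e2]; split_ifs <;> simp
  have c3 : ((S.filter (fun v => ¬ ∃ j : Fin (k-1), v = Sum.inr j)).filter (fun v => ¬ v = Sum.inl none)).card
      = (Finset.univ.filter (fun i : Fin k => (Sum.inl (some i) : Option (Fin k) ⊕ Fin (k-1)) ∈ S)).card := by
    rw [e3, Finset.card_image_of_injective]
    intro a b hab
    simpa using hab
  omega



/-- the bad pairing, first members -/
def xF (k : ℕ) (hk : 6 ≤ k) : Fin k → Option (Fin k) ⊕ Fin (k - 1) := fun i =>
  if i.val = 0 then Sum.inl none else Sum.inl (some ⟨i.val - 1, by have := i.2; omega⟩)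

/-- the bad pairing, second members -/
def yF (k : ℕ) (hk : 6 ≤ k) (w : Fin (k - 1)) : Fin k → Option (Fin k) ⊕ Fin (k - 1) := fun i =>
  if i.val = 0 then Sum.inr w
  else if i.val = 1 then Sum.inl (some ⟨k - 1, by omega⟩)
  else if i.val - 2 < w.val then Sum.inr ⟨i.val - 2, by have := w.2; omega⟩
  else Sum.inr ⟨i.val - 1, by have := i.2; omega⟩

lemma xF_inj (hk : 6 ≤ k) : ∀ i j : Fin k, xF k hk i = xF k hk j → i = j := by
  intro i j h
  have hi := i.2; have hj := j.2
  unfold xF at h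
  split_ifs at h <;> simp_all [Fin.ext_iff] <;> omega

lemma yF_inj (hk : 6 ≤ k) : ∀ i j : Fin k, yF k hk w i = yF k hk w j → i = j := by
  intro i j h
  have hi := i.2; have hj := j.2; have hw := w.2
  unfold yF at h
  split_ifs at h <;> simp_all [Fin.ext_iff] <;> omega

lemma xF_ne_yF (hk : 6 ≤ k) : ∀ i j : Fin k, xF k hk i ≠ yF k hk w j := by
  intro i j h
  have hi := i.2; have hj := j.2; have hw := w.2
  unfold xF yF at h
  split_ifs at h <;> simp_all [Fin.ext_iff] <;> omega

lemma pairing_inj (hk : 6 ≤ k) :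
    Function.Injective (Sum.elim (xF k hk) (yF k hk w)) := by
  intro s t h
  cases s with
  | inl i =>
    cases t with
    | inl j => exact congrArg _ (xF_inj hk i j h)
    | inr j => exact absurd h (xF_ne_yF w hk i j)
  | inr i =>
    cases t with
    | inl j => exact absurd h.symm (xF_ne_yF w hk j i)
    | inr j => exact congrArg _ (yF_inj w hk i j h)

lemma endpoint_edge {V : Type*} {G : SimpleGraph V} {u v : V} (P : G.Walk u v) (hne : u ≠ v) :
    ∃ z, G.Adj u z ∧ s(u, z) ∈ P.edges := by
  obtain ⟨z, h, P', rfl⟩ := P.exists_eq_cons_of_ne hne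
  exact ⟨z, h, by simp⟩

lemma key (hk : 6 ≤ k) {b : Fin (k - 1)}
    (P : (starMatchedComplete k w).Walk (Sum.inl none) (Sum.inr b)) (hP : P.IsPath) :
    ∃ i : Fin k, s(Sum.inl none, Sum.inl (some i)) ∈ P.edges ∧
      s(Sum.inl (some i), (Sum.inr (mt w i) : Option (Fin k) ⊕ Fin (k-1))) ∈ P.edges := by
  obtain ⟨z1, h1, P1, rfl⟩ := P.exists_eq_cons_of_ne (by simp)
  obtain ⟨i, rfl⟩ := center_nbr w h1
  obtain ⟨z2, h2, P2, rfl⟩ := P1.exists_eq_cons_of_ne (by simp)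
  rcases leaf_nbr w h2 with rfl | rfl
  · rw [Walk.cons_isPath_iff] at hP
    exact absurd (by simp [Walk.support_cons]) hP.2
  · exact ⟨i, by simp, by simp⟩

theorem not_pp (hk : 6 ≤ k) : ¬ PathPairable (starMatchedComplete k w) k := by
  rintro ⟨-, h⟩
  obtain ⟨p, hpath, hdisj⟩ := h (xF k hk) (yF k hk w) (pairing_inj w hk)
  set i0 : Fin k := ⟨0, by omega⟩ with hi0
  obtain ⟨i, e1, e2⟩ := key w hk (p i0) (hpath i0)
  have hii := i.2
  by_cases hilt : (i : ℕ) < k - 1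
  · -- leaf i is x j for j = i+1
    set j : Fin k := ⟨i.val + 1, by omega⟩ with hjdef
    have hji0 : j ≠ i0 := by simp [hjdef, hi0, Fin.ext_iff]
    have hxj : xF k hk j = Sum.inl (some i) := by
      simp [xF, hjdef, Fin.ext_iff]
    have hne : xF k hk j ≠ yF k hk w j := xF_ne_yF w hk j j
    obtain ⟨z, hadj, he⟩ := endpoint_edge (p j) hne
    rw [hxj] at hadj
    have heq : s(xF k hk j, z) = s(Sum.inl (some i), z) := by rw [hxj]
    rw [heq] at he
    rcases leaf_nbr w hadj with rfl | rfl
    · exact hdisj j i0 hji0 he (by rw [Sym2.eq_swap]; exact e1)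
    · exact hdisj j i0 hji0 he e2
  · -- leaf i is y j for j = 1
    have hival : (i : ℕ) = k - 1 := by omega
    set j : Fin k := ⟨1, by omega⟩ with hjdef
    have hji0 : j ≠ i0 := by simp [hjdef, hi0, Fin.ext_iff]
    have hyj : yF k hk w j = Sum.inl (some i) := by
      simp [yF, hjdef, Fin.ext_iff, hival]
    have hne : yF k hk w j ≠ xF k hk j := (xF_ne_yF w hk j j).symm
    obtain ⟨z, hadj, he⟩ := endpoint_edge (p j).reverse hne
    rw [Walk.edges_reverse, List.mem_reverse] at he
    rw [hyj] at hadj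
    have heq : s(yF k hk w j, z) = s(Sum.inl (some i), z) := by rw [hyj]
    rw [heq] at he
    rcases leaf_nbr w hadj with rfl | rfl
    · exact hdisj j i0 hji0 he (by rw [Sym2.eq_swap]; exact e1)
    · exact hdisj j i0 hji0 he e2



theorem cut_cond (hk : 6 ≤ k) (S : Finset (Option (Fin k) ⊕ Fin (k - 1)))
    (hS : S.card ≤ k) : S.card ≤ edgeCut (starMatchedComplete k w) S := by
  classical
  -- vertex classes
  set LS : Finset (Fin k) :=
    Finset.univ.filter (fun i : Fin k => (Sum.inl (some i) : Option (Fin k) ⊕ Fin (k-1)) ∈ S)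
    with hLSdef
  set LC : Finset (Fin k) :=
    Finset.univ.filter (fun i : Fin k => ¬ (Sum.inl (some i) : Option (Fin k) ⊕ Fin (k-1)) ∈ S)
    with hLCdef
  set QS : Finset (Fin (k-1)) :=
    Finset.univ.filter (fun j : Fin (k-1) => (Sum.inr j : Option (Fin k) ⊕ Fin (k-1)) ∈ S)
    with hQSdef
  set QC : Finset (Fin (k-1)) :=
    Finset.univ.filter (fun j : Fin (k-1) => ¬ (Sum.inr j : Option (Fin k) ⊕ Fin (k-1)) ∈ S)
    with hQCdef
  set TT : Finset (Fin k) :=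
    Finset.univ.filter (fun i : Fin k =>
      (Sum.inr (mt w i) : Option (Fin k) ⊕ Fin (k-1)) ∈ S ∧
      (Sum.inl (some i) : Option (Fin k) ⊕ Fin (k-1)) ∈ S) with hTTdef
  set RR : Finset (Fin k) :=
    Finset.univ.filter (fun i : Fin k =>
      (Sum.inr (mt w i) : Option (Fin k) ⊕ Fin (k-1)) ∈ S ∧
      ¬ (Sum.inl (some i) : Option (Fin k) ⊕ Fin (k-1)) ∈ S) with hRRdef
  set D3s : Finset (Fin k) :=
    Finset.univ.filter (fun i : Fin k =>
      (Sum.inl (some i) : Option (Fin k) ⊕ Fin (k-1)) ∈ S ∧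
      ¬ (Sum.inr (mt w i) : Option (Fin k) ⊕ Fin (k-1)) ∈ S) with hD3sdef
  -- cardinalities of vertex classes
  have hLk : LS.card + LC.card = k := by
    rw [hLSdef, hLCdef]
    rw [Finset.card_filter_add_card_filter_not]
    simp
  have hQk : QS.card + QC.card = k - 1 := by
    rw [hQSdef, hQCdef]
    rw [Finset.card_filter_add_card_filter_not]
    simp
  -- split of M
  have hM : TT.card + RR.card = QS.card +
      (if (Sum.inr w : Option (Fin k) ⊕ Fin (k-1)) ∈ S then 1 else 0) := by
    rw [← M_card w hk S]
    rw [hTTdef, hRRdef, ← Finset.filter_filter, ← Finset.filter_filter]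
    exact Finset.card_filter_add_card_filter_not _
  have hT : TT.card + D3s.card = LS.card := by
    rw [hTTdef, hD3sdef, hLSdef]
    have e1 : Finset.univ.filter (fun i : Fin k =>
        (Sum.inr (mt w i) : Option (Fin k) ⊕ Fin (k-1)) ∈ S ∧
        (Sum.inl (some i) : Option (Fin k) ⊕ Fin (k-1)) ∈ S)
        = Finset.univ.filter (fun i : Fin k =>
        (Sum.inl (some i) : Option (Fin k) ⊕ Fin (k-1)) ∈ S ∧
        (Sum.inr (mt w i) : Option (Fin k) ⊕ Fin (k-1)) ∈ S) := by
      apply Finset.filter_congr; intro i _; exact and_comm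
    rw [e1, ← Finset.filter_filter, ← Finset.filter_filter]
    exact Finset.card_filter_add_card_filter_not _
  -- the four families of cut edges
  set a : ℕ := if (Sum.inl none : Option (Fin k) ⊕ Fin (k-1)) ∈ S then 1 else 0 with hadef
  set u : ℕ := if (Sum.inr w : Option (Fin k) ⊕ Fin (k-1)) ∈ S then 1 else 0 with hudef
  set D1 : Finset ((Option (Fin k) ⊕ Fin (k-1)) × (Option (Fin k) ⊕ Fin (k-1))) :=
    if (Sum.inl none : Option (Fin k) ⊕ Fin (k-1)) ∈ S then
      LC.image (fun i => (Sum.inl none, Sum.inl (some i)))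
    else
      LS.image (fun i => (Sum.inl (some i), Sum.inl none)) with hD1def
  set D2 : Finset ((Option (Fin k) ⊕ Fin (k-1)) × (Option (Fin k) ⊕ Fin (k-1))) :=
    (QS ×ˢ QC).image (fun p => (Sum.inr p.1, Sum.inr p.2)) with hD2def
  set D4 : Finset ((Option (Fin k) ⊕ Fin (k-1)) × (Option (Fin k) ⊕ Fin (k-1))) :=
    RR.image (fun i => (Sum.inr (mt w i), Sum.inl (some i))) with hD4def
  set D3 : Finset ((Option (Fin k) ⊕ Fin (k-1)) × (Option (Fin k) ⊕ Fin (k-1))) :=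
    D3s.image (fun i => (Sum.inl (some i), Sum.inr (mt w i))) with hD3def
  -- cardinalities of the families
  have cd1 : D1.card = a * (k - LS.card) + (1 - a) * LS.card := by
    rw [hD1def, hadef]
    split_ifs with hc
    · rw [Finset.card_image_of_injective _ (fun x y h => by simpa using h)]
      omega
    · rw [Finset.card_image_of_injective _ (fun x y h => by simpa using h)]
      omega
  have cd2 : D2.card = QS.card * (k - 1 - QS.card) := by
    rw [hD2def, Finset.card_image_of_injective _
      (fun x y h => by
        simp only [Prod.mk.injEq, Sum.inr.injEq] at h
        exact Prod.ext h.1 h.2),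
      Finset.card_product]
    congr 1
    omega
  have cd3 : D3.card = LS.card - TT.card := by
    rw [hD3def, Finset.card_image_of_injective _ (fun x y h => by
      simp only [Prod.mk.injEq, Sum.inl.injEq, Option.some.injEq] at h; exact h.1)]
    omega
  have cd4 : D4.card = RR.card := by
    rw [hD4def, Finset.card_image_of_injective _ (fun x y h => by
      simp only [Prod.mk.injEq, Sum.inl.injEq, Option.some.injEq] at h; exact h.2)]
  -- shapes
  have s1 : ∀ p ∈ D1, p.1 = Sum.inl none ∨ p.2 = (Sum.inl none : Option (Fin k) ⊕ Fin (k-1)) := by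
    rw [hD1def]
    split_ifs with hc <;> intro p hp <;> rw [Finset.mem_image] at hp <;>
      obtain ⟨i, -, rfl⟩ := hp
    · exact Or.inl rfl
    · exact Or.inr rfl
  have s2 : ∀ p ∈ D2, (∃ j : Fin (k-1), p.1 = Sum.inr j) ∧ (∃ j : Fin (k-1), p.2 = Sum.inr j) := by
    intro p hp
    rw [hD2def, Finset.mem_image] at hp
    obtain ⟨x, -, rfl⟩ := hp
    exact ⟨⟨x.1, rfl⟩, ⟨x.2, rfl⟩⟩
  have s3 : ∀ p ∈ D3, (∃ i : Fin k, p.1 = Sum.inl (some i)) ∧ (∃ j : Fin (k-1), p.2 = Sum.inr j) := by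
    intro p hp
    rw [hD3def, Finset.mem_image] at hp
    obtain ⟨i, -, rfl⟩ := hp
    exact ⟨⟨i, rfl⟩, ⟨mt w i, rfl⟩⟩
  have s4 : ∀ p ∈ D4, (∃ j : Fin (k-1), p.1 = Sum.inr j) ∧ (∃ i : Fin k, p.2 = Sum.inl (some i)) := by
    intro p hp
    rw [hD4def, Finset.mem_image] at hp
    obtain ⟨i, -, rfl⟩ := hp
    exact ⟨⟨mt w i, rfl⟩, ⟨i, rfl⟩⟩
  -- disjointness
  have dj34 : Disjoint D3 D4 := by
    rw [Finset.disjoint_left]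
    intro p hp hq
    obtain ⟨⟨i, hi⟩, -⟩ := s3 p hp
    obtain ⟨⟨j, hj⟩, -⟩ := s4 p hq
    rw [hi] at hj
    exact absurd hj (by simp)
  have dj234 : Disjoint D2 (D3 ∪ D4) := by
    rw [Finset.disjoint_left]
    intro p hp hq
    obtain ⟨⟨j, hj⟩, ⟨j', hj'⟩⟩ := s2 p hp
    rcases Finset.mem_union.mp hq with h | h
    · obtain ⟨⟨i, hi⟩, -⟩ := s3 p h
      rw [hj] at hi
      exact absurd hi (by simp)
    · obtain ⟨-, ⟨i, hi⟩⟩ := s4 p h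
      rw [hj'] at hi
      exact absurd hi (by simp)
  have dj1234 : Disjoint D1 (D2 ∪ (D3 ∪ D4)) := by
    rw [Finset.disjoint_left]
    intro p hp hq
    rcases s1 p hp with h1 | h1
    · have : (∃ j : Fin (k-1), p.1 = Sum.inr j) ∨ (∃ i : Fin k, p.1 = Sum.inl (some i)) := by
        rcases Finset.mem_union.mp hq with h | h
        · exact Or.inl (s2 p h).1
        · rcases Finset.mem_union.mp h with h | h
          · exact Or.inr (s3 p h).1
          · exact Or.inl (s4 p h).1
      rcases this with ⟨j, hj⟩ | ⟨i, hi⟩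
      · rw [h1] at hj; exact absurd hj (by simp)
      · rw [h1] at hi; exact absurd hi (by simp)
    · have : (∃ j : Fin (k-1), p.2 = Sum.inr j) ∨ (∃ i : Fin k, p.2 = Sum.inl (some i)) := by
        rcases Finset.mem_union.mp hq with h | h
        · exact Or.inl (s2 p h).2
        · rcases Finset.mem_union.mp h with h | h
          · exact Or.inl (s3 p h).2
          · exact Or.inr (s4 p h).2
      rcases this with ⟨j, hj⟩ | ⟨i, hi⟩
      · rw [h1] at hj; exact absurd hj (by simp)
      · rw [h1] at hi; exact absurd hi (by simp)
  -- validity of the families as cut pairs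
  have hvalid : ∀ p ∈ D1 ∪ (D2 ∪ (D3 ∪ D4)),
      (starMatchedComplete k w).Adj p.1 p.2 ∧ p.1 ∈ S ∧ p.2 ∉ S := by
    intro p hp
    rcases Finset.mem_union.mp hp with h | h
    · rw [hD1def] at h
      split_ifs at h with hc
      · rw [Finset.mem_image] at h
        obtain ⟨i, hi, rfl⟩ := h
        rw [hLCdef, Finset.mem_filter] at hi
        exact ⟨adj_center_leaf w i, hc, hi.2⟩
      · rw [Finset.mem_image] at h
        obtain ⟨i, hi, rfl⟩ := h
        rw [hLSdef, Finset.mem_filter] at hi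
        exact ⟨(adj_center_leaf w i).symm, hi.2, hc⟩
    rcases Finset.mem_union.mp h with h | h
    · rw [hD2def, Finset.mem_image] at h
      obtain ⟨x, hx, rfl⟩ := h
      rw [Finset.mem_product] at hx
      obtain ⟨hx1, hx2⟩ := hx
      rw [hQSdef, Finset.mem_filter] at hx1
      rw [hQCdef, Finset.mem_filter] at hx2
      refine ⟨adj_clique w ?_, hx1.2, hx2.2⟩
      intro hxy
      exact hx2.2 (hxy ▸ hx1.2)
    rcases Finset.mem_union.mp h with h | h
    · rw [hD3def, Finset.mem_image] at h
      obtain ⟨i, hi, rfl⟩ := h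
      rw [hD3sdef, Finset.mem_filter] at hi
      exact ⟨adj_leaf_mt w i, hi.2.1, hi.2.2⟩
    · rw [hD4def, Finset.mem_image] at h
      obtain ⟨i, hi, rfl⟩ := h
      rw [hRRdef, Finset.mem_filter] at hi
      exact ⟨(adj_leaf_mt w i).symm, hi.2.1, hi.2.2⟩
  have hcardunion : (D1 ∪ (D2 ∪ (D3 ∪ D4))).card
      = D1.card + (D2.card + (D3.card + D4.card)) := by
    rw [Finset.card_union_of_disjoint dj1234, Finset.card_union_of_disjoint dj234,
      Finset.card_union_of_disjoint dj34]
  -- numeric constraints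
  have ha : a ≤ 1 := by rw [hadef]; split_ifs <;> omega
  have hu : u ≤ 1 := by rw [hudef]; split_ifs <;> omega
  have huq : u ≤ QS.card := by
    rw [hudef]
    split_ifs with hw
    · exact Finset.card_pos.mpr ⟨w, by rw [hQSdef]; simp [hw]⟩
    · omega
  have hq2 : QS.card ≤ k - 2 + u := by
    rw [hudef]
    split_ifs with hw
    · omega
    · have hsub : QS ⊆ Finset.univ.erase w := by
        intro j hj
        rw [Finset.mem_erase]
        refine ⟨?_, Finset.mem_univ _⟩
        rintro rfl
        rw [hQSdef, Finset.mem_filter] at hj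
        exact hw hj.2
      have hle := Finset.card_le_card hsub
      rw [Finset.card_erase_of_mem (Finset.mem_univ _), Finset.card_univ, Fintype.card_fin] at hle
      omega
  have hsplit := card_split k S
  rw [← hadef, ← hLSdef, ← hQSdef] at hsplit
  have harith := arith k a u LS.card QS.card TT.card RR.card ha hu huq
    (by omega) (by omega) hM (by omega) (by omega) hq2 hk
  calc S.card = a + LS.card + QS.card := hsplit
    _ ≤ a * (k - LS.card) + (1 - a) * LS.card + QS.card * (k - 1 - QS.card)
        + (LS.card - TT.card) + RR.card := harith
    _ = D1.card + (D2.card + (D3.card + D4.card)) := by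
        rw [cd1, cd2, cd3, cd4]
        simp only [Nat.add_assoc]
    _ = (D1 ∪ (D2 ∪ (D3 ∪ D4))).card := hcardunion.symm
    _ ≤ edgeCut (starMatchedComplete k w) S := card_le_edgeCut _ S _ hvalid




end SMC

/-- For `k ≥ 6`, the graph obtained from `K_{1,k}` and `K_{k-1}` by the matching
construction is not path-pairable (not `k`-path-pairable), although it satisfies
the cut-condition. -/
theorem starMatchedComplete_not_pathPairable (k : ℕ) (hk : 6 ≤ k) (w : Fin (k - 1)) :
    ¬ PathPairable (starMatchedComplete k w) k ∧
      ∀ S : Finset (Option (Fin k) ⊕ Fin (k - 1)),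
        S.card ≤ k → S.card ≤ edgeCut (starMatchedComplete k w) S :=
  ⟨SMC.not_pp w hk, fun S hS => SMC.cut_cond w hk S hS⟩
end

section
/- The Cartesian product K_{1,b} □ K_{1,d} of two stars is not (⌈(b+d)/2⌉ + 1)-path-pairable. -/
open SimpleGraph
open scoped Classical

/-! ### Auxiliary walk lemmas -/

private lemma exists_edge_start {V : Type*} {G : SimpleGraph V} {u v : V}
    (W : G.Walk u v) (h : u ≠ v) :
    ∃ w, s(u, w) ∈ W.edges ∧ w ∈ W.support := by
  cases W with
  | nil => exact absurd rfl h
  | @cons _ w _ hadj q =>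
      refine ⟨w, ?_, ?_⟩
      · rw [SimpleGraph.Walk.edges_cons]; exact List.mem_cons_self
      · rw [SimpleGraph.Walk.support_cons]
        exact List.mem_cons_of_mem _ q.start_mem_support

private lemma two_edges {V : Type*} {G : SimpleGraph V} [DecidableEq V] {u v z : V}
    (W : G.Walk u v) (hp : W.IsPath) (hz : z ∈ W.support) (hu : z ≠ u) (hv : z ≠ v) :
    ∃ w₁ w₂, s(z, w₁) ∈ W.edges ∧ s(z, w₂) ∈ W.edges ∧ s(z, w₁) ≠ s(z, w₂) := by
  have hE : W.edges = (W.takeUntil z hz).edges ++ (W.dropUntil z hz).edges := by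
    conv_lhs => rw [← W.take_spec hz]
    exact SimpleGraph.Walk.edges_append _ _
  obtain ⟨w₁, hw₁, -⟩ := exists_edge_start (W.takeUntil z hz).reverse hu
  rw [SimpleGraph.Walk.edges_reverse, List.mem_reverse] at hw₁
  obtain ⟨w₂, hw₂, -⟩ := exists_edge_start (W.dropUntil z hz) hv
  have hnd := hp.edges_nodup
  rw [hE] at hnd
  have hdisj := (List.nodup_append.mp hnd).2.2
  refine ⟨w₁, w₂, ?_, ?_, ?_⟩
  · rw [hE]; exact List.mem_append_left _ hw₁
  · rw [hE]; exact List.mem_append_right _ hw₂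
  · intro he; exact hdisj _ hw₁ _ hw₂ he

/-! ### Adjacency computations in the product of two stars -/

private lemma star_right {n : ℕ} {i : Fin n} {u : Fin 1 ⊕ Fin n}
    (h : (completeBipartiteGraph (Fin 1) (Fin n)).Adj (Sum.inr i) u) : u = Sum.inl 0 := by
  cases u with
  | inl a => exact congrArg Sum.inl (Subsingleton.elim a 0)
  | inr a => simp [completeBipartiteGraph] at h

private lemma star_left {n : ℕ} {a : Fin 1} {u : Fin 1 ⊕ Fin n}
    (h : (completeBipartiteGraph (Fin 1) (Fin n)).Adj (Sum.inl a) u) : ∃ j, u = Sum.inr j := by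
  cases u with
  | inl a' => simp [completeBipartiteGraph] at h
  | inr j => exact ⟨j, rfl⟩

private lemma adj_corner {b d : ℕ} {i : Fin b} {j : Fin d}
    {z : (Fin 1 ⊕ Fin b) × (Fin 1 ⊕ Fin d)}
    (h : (completeBipartiteGraph (Fin 1) (Fin b) □ completeBipartiteGraph (Fin 1) (Fin d)).Adj
      (Sum.inr i, Sum.inr j) z) :
    z = (Sum.inl 0, Sum.inr j) ∨ z = (Sum.inr i, Sum.inl 0) := by
  obtain ⟨z1, z2⟩ := z
  rcases (SimpleGraph.boxProd_adj).mp h with ⟨h1, h2⟩ | ⟨h1, h2⟩ <;> dsimp only at h1 h2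
  · left; rw [star_right h1, ← h2]
  · right; rw [star_right h1, ← h2]

private lemma adj_acenter {b d : ℕ} {i : Fin b} {a : Fin 1}
    {z : (Fin 1 ⊕ Fin b) × (Fin 1 ⊕ Fin d)}
    (h : (completeBipartiteGraph (Fin 1) (Fin b) □ completeBipartiteGraph (Fin 1) (Fin d)).Adj
      (Sum.inr i, Sum.inl a) z) :
    z = (Sum.inl 0, Sum.inl a) ∨ ∃ j : Fin d, z = (Sum.inr i, Sum.inr j) := by
  obtain ⟨z1, z2⟩ := z
  rcases (SimpleGraph.boxProd_adj).mp h with ⟨h1, h2⟩ | ⟨h1, h2⟩ <;> dsimp only at h1 h2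
  · left; rw [star_right h1, ← h2]
  · obtain ⟨j, rfl⟩ := star_left h1
    exact Or.inr ⟨j, by rw [← h2]⟩

private lemma adj_rcenter {b d : ℕ} {j : Fin d} {a : Fin 1}
    {z : (Fin 1 ⊕ Fin b) × (Fin 1 ⊕ Fin d)}
    (h : (completeBipartiteGraph (Fin 1) (Fin b) □ completeBipartiteGraph (Fin 1) (Fin d)).Adj
      (Sum.inl a, Sum.inr j) z) :
    z = (Sum.inl a, Sum.inl 0) ∨ ∃ i : Fin b, z = (Sum.inr i, Sum.inr j) := by
  obtain ⟨z1, z2⟩ := z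
  rcases (SimpleGraph.boxProd_adj).mp h with ⟨h1, h2⟩ | ⟨h1, h2⟩ <;> dsimp only at h1 h2
  · obtain ⟨i, rfl⟩ := star_left h1
    exact Or.inr ⟨i, by rw [← h2]⟩
  · left; rw [star_right h1, ← h2]

/-! ### The terminal configuration -/

private def starT (b d : ℕ) (hb : 0 < b) (hd : 0 < d) (t : ℕ) :
    (Fin 1 ⊕ Fin b) × (Fin 1 ⊕ Fin d) :=
  if t = 0 then (Sum.inl 0, Sum.inl 0)
  else if t = 1 then (Sum.inr ⟨0, hb⟩, Sum.inr ⟨0, hd⟩)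
  else if t = 2 then (Sum.inr ⟨0, hb⟩, Sum.inl 0)
  else if t = 3 then (Sum.inl 0, Sum.inr ⟨0, hd⟩)
  else if h : t - 3 < b then (Sum.inr ⟨t - 3, h⟩, Sum.inr ⟨0, hd⟩)
  else if h2 : t - 2 - b < d then (Sum.inr ⟨0, hb⟩, Sum.inr ⟨t - 2 - b, h2⟩)
  else if hb2 : 1 < b then (Sum.inr ⟨1, hb2⟩, Sum.inl 0)
  else if hd2 : 1 < d then (Sum.inl 0, Sum.inr ⟨1, hd2⟩)
  else (Sum.inl 0, Sum.inl 0)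

private def invT (b d : ℕ) : (Fin 1 ⊕ Fin b) × (Fin 1 ⊕ Fin d) → ℕ
  | (Sum.inl _, Sum.inl _) => 0
  | (Sum.inr i, Sum.inr j) =>
      if i.val = 0 then (if j.val = 0 then 1 else b + 2 + j.val) else i.val + 3
  | (Sum.inr i, Sum.inl _) => if i.val = 0 then 2 else b + d + 2
  | (Sum.inl _, Sum.inr j) => if j.val = 0 then 3 else b + d + 2

private lemma starT_inv (b d : ℕ) (hb : 0 < b) (hd : 0 < d) (t : ℕ)
    (ht : t < 2 * ((b + d + 1) / 2 + 1)) :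
    invT b d (starT b d hb hd t) = t := by
  unfold starT
  split_ifs with h0 h1 h2 h3 h4 h5 h6 h7
  · simp only [invT]; omega
  · simp only [invT]; norm_num; omega
  · simp only [invT]; norm_num; omega
  · simp only [invT]; norm_num; omega
  · simp only [invT]
    rw [if_neg (by omega)]
    omega
  · simp only [invT, if_true]
    rw [if_neg (by omega)]
    omega
  · simp only [invT]
    rw [if_neg (by omega)]
    omega
  · simp only [invT]
    rw [if_neg (by omega)]
    omega
  · simp only [invT]; omega

private lemma starT_col (b d : ℕ) (hb : 0 < b) (hd : 0 < d) (i : ℕ) (h1 : 1 ≤ i) (h2 : i < b) :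
    starT b d hb hd (i + 3) = (Sum.inr ⟨i, h2⟩, Sum.inr ⟨0, hd⟩) := by
  unfold starT
  rw [if_neg (by omega), if_neg (by omega), if_neg (by omega), if_neg (by omega),
    dif_pos (show i + 3 - 3 < b by omega)]
  simp only [Prod.mk.injEq, Sum.inr.injEq, Fin.mk.injEq]
  exact ⟨by omega, trivial⟩

private lemma starT_row (b d : ℕ) (hb : 0 < b) (hd : 0 < d) (j : ℕ) (h1 : 1 ≤ j) (h2 : j < d) :
    starT b d hb hd (b + 2 + j) = (Sum.inr ⟨0, hb⟩, Sum.inr ⟨j, h2⟩) := by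
  unfold starT
  rw [if_neg (by omega), if_neg (by omega), if_neg (by omega), if_neg (by omega),
    dif_neg (by omega), dif_pos (show b + 2 + j - 2 - b < d by omega)]
  simp only [Prod.mk.injEq, Sum.inr.injEq, Fin.mk.injEq]
  exact ⟨trivial, by omega⟩

/-- The Cartesian product of the stars `K_{1,b}` and `K_{1,d}` is not
`(⌈(b+d)/2⌉ + 1)`-path-pairable. -/
theorem boxProd_stars_not_pathPairable (b d : ℕ) :
    ¬ PathPairable
        (completeBipartiteGraph (Fin 1) (Fin b) □ completeBipartiteGraph (Fin 1) (Fin d))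
        ((b + d + 1) / 2 + 1) := by
  rintro ⟨hcard, hmain⟩
  rw [show Fintype.card ((Fin 1 ⊕ Fin b) × (Fin 1 ⊕ Fin d)) = (1 + b) * (1 + d) by simp] at hcard
  -- degenerate cases: too few vertices
  rcases Nat.eq_zero_or_pos b with rfl | hb
  · norm_num at hcard; omega
  rcases Nat.eq_zero_or_pos d with rfl | hd
  · norm_num at hcard; omega
  clear hcard
  -- the terminal configuration
  set k : ℕ := (b + d + 1) / 2 + 1 with hk
  clear_value k
  have hk2 : 2 ≤ k := by omega
  set x : Fin k → (Fin 1 ⊕ Fin b) × (Fin 1 ⊕ Fin d) :=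
    fun i => starT b d hb hd (2 * i.val) with hxdef
  set y : Fin k → (Fin 1 ⊕ Fin b) × (Fin 1 ⊕ Fin d) :=
    fun i => starT b d hb hd (2 * i.val + 1) with hydef
  have hinj : Function.Injective (Sum.elim x y) := by
    rintro (s | s) (t | t) hst <;>
      simp only [Sum.elim_inl, Sum.elim_inr, hxdef, hydef] at hst <;>
      have h2 := congrArg (invT b d) hst <;>
      have hs := s.2 <;> have ht := t.2 <;>
      rw [starT_inv b d hb hd _ (by omega), starT_inv b d hb hd _ (by omega)] at h2
    · exact congrArg Sum.inl (Fin.ext (by omega))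
    · exact absurd h2 (by omega)
    · exact absurd h2 (by omega)
    · exact congrArg Sum.inr (Fin.ext (by omega))
  obtain ⟨p, hpath, hdisj⟩ := hmain x y hinj
  -- names for the special indices and vertices
  set i0 : Fin k := ⟨0, by omega⟩ with hi0
  set i1 : Fin k := ⟨1, by omega⟩ with hi1
  have h01 : i0 ≠ i1 := by
    intro h
    have := congrArg Fin.val h
    simp [hi0, hi1] at this
  have hx0 : x i0 = (Sum.inl 0, Sum.inl 0) := rfl
  have hy0 : y i0 = (Sum.inr ⟨0, hb⟩, Sum.inr ⟨0, hd⟩) := rfl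
  have hx1 : x i1 = (Sum.inr ⟨0, hb⟩, Sum.inl 0) := rfl
  have hy1 : y i1 = (Sum.inl 0, Sum.inr ⟨0, hd⟩) := rfl
  have hne : ∀ t : Fin k, x t ≠ y t := by
    intro t h
    have h2 : Sum.elim x y (Sum.inl t) = Sum.elim x y (Sum.inr t) := by simpa using h
    have := hinj h2
    simp at this
  -- every slot value is a terminal
  have hslot : ∀ t : ℕ, t < 2 * k →
      ∃ t₀ : Fin k, x t₀ = starT b d hb hd t ∨ y t₀ = starT b d hb hd t := by
    intro t ht
    rcases Nat.even_or_odd t with ⟨r, rfl⟩ | ⟨r, rfl⟩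
    · refine ⟨⟨r, by omega⟩, Or.inl ?_⟩
      show starT b d hb hd (2 * r) = starT b d hb hd (r + r)
      congr 1
      omega
    · refine ⟨⟨r, by omega⟩, Or.inr ?_⟩
      show starT b d hb hd (2 * r + 1) = starT b d hb hd (2 * r + 1)
      rfl
  -- coverage of the blocked corners
  have hcoverCol : ∀ i : Fin b,
      ∃ t₀ : Fin k, x t₀ = (Sum.inr i, Sum.inr ⟨0, hd⟩) ∨ y t₀ = (Sum.inr i, Sum.inr ⟨0, hd⟩) := by
    intro i
    by_cases hi : i.val = 0
    · refine ⟨i0, Or.inr ?_⟩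
      rw [hy0]
      have : (⟨0, hb⟩ : Fin b) = i := Fin.ext (by simp [hi])
      rw [this]
    · have hib := i.2
      obtain ⟨t₀, h⟩ := hslot (i.val + 3) (by omega)
      rw [starT_col b d hb hd i.val (by omega) i.2] at h
      simpa [Fin.eta] using ⟨t₀, h⟩
  have hcoverRow : ∀ j : Fin d,
      ∃ t₀ : Fin k, x t₀ = (Sum.inr ⟨0, hb⟩, Sum.inr j) ∨ y t₀ = (Sum.inr ⟨0, hb⟩, Sum.inr j) := by
    intro j
    by_cases hj : j.val = 0
    · refine ⟨i0, Or.inr ?_⟩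
      rw [hy0]
      have : (⟨0, hd⟩ : Fin d) = j := Fin.ext (by simp [hj])
      rw [this]
    · have hjd := j.2
      obtain ⟨t₀, h⟩ := hslot (b + 2 + j.val) (by omega)
      rw [starT_row b d hb hd j.val (by omega) j.2] at h
      simpa [Fin.eta] using ⟨t₀, h⟩
  -- each terminal's path has an edge at the terminal
  have hender : ∀ (t₀ : Fin k) (z : (Fin 1 ⊕ Fin b) × (Fin 1 ⊕ Fin d)),
      (x t₀ = z ∨ y t₀ = z) → ∃ w, s(z, w) ∈ (p t₀).edges := by
    intro t₀ z hz
    rcases hz with rfl | rfl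
    · obtain ⟨w, hw, -⟩ := exists_edge_start (p t₀) (hne t₀)
      exact ⟨w, hw⟩
    · obtain ⟨w, hw, -⟩ := exists_edge_start (p t₀).reverse (Ne.symm (hne t₀))
      rw [SimpleGraph.Walk.edges_reverse, List.mem_reverse] at hw
      exact ⟨w, hw⟩
  -- blocking: a terminal vertex of degree ≤ 2 cannot be interior to any path of the system
  have hblock : ∀ (t : Fin k) (z n₁ n₂ : (Fin 1 ⊕ Fin b) × (Fin 1 ⊕ Fin d)),
      (∀ w, (completeBipartiteGraph (Fin 1) (Fin b) □
          completeBipartiteGraph (Fin 1) (Fin d)).Adj z w → w = n₁ ∨ w = n₂) →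
      (∃ t₀ : Fin k, x t₀ = z ∨ y t₀ = z) →
      z ∈ (p t).support → z ≠ x t → z ≠ y t → False := by
    intro t z n₁ n₂ hnb hcov hzs hzx hzy
    obtain ⟨t₀, ht₀⟩ := hcov
    obtain ⟨w₁, w₂, hm₁, hm₂, hne12⟩ := two_edges (p t) (hpath t) hzs hzx hzy
    have hadj₁ := (p t).adj_of_mem_edges hm₁
    have hadj₂ := (p t).adj_of_mem_edges hm₂
    obtain ⟨w₃, hm₃⟩ := hender t₀ z ht₀
    have hadj₃ := (p t₀).adj_of_mem_edges hm₃
    have hm₃' : s(z, w₃) ∈ (p t).edges := by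
      rcases hnb _ hadj₁ with rfl | rfl <;> rcases hnb _ hadj₂ with rfl | rfl <;>
        rcases hnb _ hadj₃ with rfl | rfl <;>
        first
          | exact hm₁
          | exact hm₂
          | exact absurd rfl hne12
    rcases eq_or_ne t₀ t with rfl | hts
    · rcases ht₀ with h | h
      · exact hzx h.symm
      · exact hzy h.symm
    · exact hdisj t₀ t hts hm₃ hm₃'
  -- Step 1: the (a1,r1)-path starts with the edge a1-c
  obtain ⟨v₁, hv₁e, hv₁s⟩ := exists_edge_start (p i1) (hne i1)
  have hadjA := (p i1).adj_of_mem_edges hv₁e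
  rw [hx1] at hadjA
  have hP1c : s(((Sum.inr ⟨0, hb⟩ : Fin 1 ⊕ Fin b), (Sum.inl 0 : Fin 1 ⊕ Fin d)),
      ((Sum.inl 0 : Fin 1 ⊕ Fin b), (Sum.inl 0 : Fin 1 ⊕ Fin d))) ∈ (p i1).edges := by
    rcases adj_acenter hadjA with h | ⟨j, rfl⟩
    · rw [← hx1, ← h]
      exact hv₁e
    · exact (hblock i1 (Sum.inr ⟨0, hb⟩, Sum.inr j) (Sum.inl 0, Sum.inr j)
          (Sum.inr ⟨0, hb⟩, Sum.inl 0) (fun w hw => adj_corner hw) (hcoverRow j) hv₁s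
          (by rw [hx1]; simp) (by rw [hy1]; simp)).elim
  -- Step 2: the (a1,r1)-path ends with the edge c-r1
  obtain ⟨v₂, hv₂e, hv₂s⟩ := exists_edge_start (p i1).reverse (Ne.symm (hne i1))
  rw [SimpleGraph.Walk.edges_reverse, List.mem_reverse] at hv₂e
  rw [SimpleGraph.Walk.support_reverse, List.mem_reverse] at hv₂s
  have hadjR := (p i1).adj_of_mem_edges hv₂e
  rw [hy1] at hadjR
  have hP1r : s(((Sum.inl 0 : Fin 1 ⊕ Fin b), (Sum.inr ⟨0, hd⟩ : Fin 1 ⊕ Fin d)),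
      ((Sum.inl 0 : Fin 1 ⊕ Fin b), (Sum.inl 0 : Fin 1 ⊕ Fin d))) ∈ (p i1).edges := by
    rcases adj_rcenter hadjR with h | ⟨i, rfl⟩
    · rw [← hy1, ← h]
      exact hv₂e
    · exact (hblock i1 (Sum.inr i, Sum.inr ⟨0, hd⟩) (Sum.inl 0, Sum.inr ⟨0, hd⟩)
          (Sum.inr i, Sum.inl 0) (fun w hw => adj_corner hw) (hcoverCol i) hv₂s
          (by rw [hx1]; simp) (by rw [hy1]; simp)).elim
  -- Step 3: the (c,(1,1))-path cannot enter the corner (1,1)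
  obtain ⟨v₃, hv₃e, hv₃s⟩ := exists_edge_start (p i0).reverse (Ne.symm (hne i0))
  rw [SimpleGraph.Walk.edges_reverse, List.mem_reverse] at hv₃e
  rw [SimpleGraph.Walk.support_reverse, List.mem_reverse] at hv₃s
  have hadjW := (p i0).adj_of_mem_edges hv₃e
  rw [hy0] at hadjW
  rcases adj_corner hadjW with rfl | rfl
  · -- the path enters (1,1) through r1
    have hRs : ((Sum.inl 0 : Fin 1 ⊕ Fin b), (Sum.inr ⟨0, hd⟩ : Fin 1 ⊕ Fin d)) ∈
        (p i0).support := hv₃s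
    obtain ⟨w₁, w₂, hm₁, hm₂, hne12⟩ := two_edges (p i0) (hpath i0) hRs
      (by rw [hx0]; simp) (by rw [hy0]; simp)
    have hadj₁ := (p i0).adj_of_mem_edges hm₁
    have hadj₂ := (p i0).adj_of_mem_edges hm₂
    rcases adj_rcenter hadj₁ with h1 | ⟨c₁, rfl⟩
    · rw [h1] at hm₁
      exact hdisj i0 i1 h01 hm₁ hP1r
    · rcases adj_rcenter hadj₂ with h2 | ⟨c₂, rfl⟩
      · rw [h2] at hm₂
        exact hdisj i0 i1 h01 hm₂ hP1r
      · have hc12 : c₁ ≠ c₂ := by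
          intro h
          exact hne12 (by rw [h])
        rcases eq_or_ne c₁ (⟨0, hb⟩ : Fin b) with rfl | hcz
        · refine hblock i0 (Sum.inr c₂, Sum.inr ⟨0, hd⟩) (Sum.inl 0, Sum.inr ⟨0, hd⟩)
            (Sum.inr c₂, Sum.inl 0) (fun w hw => adj_corner hw) (hcoverCol c₂)
            ((p i0).snd_mem_support_of_mem_edges hm₂) (by rw [hx0]; simp) ?_
          rw [hy0]
          simp only [ne_eq, Prod.mk.injEq, Sum.inr.injEq, not_and]
          intro h _
          exact hc12 h.symm
        · refine hblock i0 (Sum.inr c₁, Sum.inr ⟨0, hd⟩) (Sum.inl 0, Sum.inr ⟨0, hd⟩)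
            (Sum.inr c₁, Sum.inl 0) (fun w hw => adj_corner hw) (hcoverCol c₁)
            ((p i0).snd_mem_support_of_mem_edges hm₁) (by rw [hx0]; simp) ?_
          rw [hy0]
          simp only [ne_eq, Prod.mk.injEq, Sum.inr.injEq, not_and]
          intro h _
          exact hcz h
  · -- the path enters (1,1) through a1
    have hAs : ((Sum.inr ⟨0, hb⟩ : Fin 1 ⊕ Fin b), (Sum.inl 0 : Fin 1 ⊕ Fin d)) ∈
        (p i0).support := hv₃s
    obtain ⟨w₁, w₂, hm₁, hm₂, hne12⟩ := two_edges (p i0) (hpath i0) hAs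
      (by rw [hx0]; simp) (by rw [hy0]; simp)
    have hadj₁ := (p i0).adj_of_mem_edges hm₁
    have hadj₂ := (p i0).adj_of_mem_edges hm₂
    rcases adj_acenter hadj₁ with h1 | ⟨j₁, rfl⟩
    · rw [h1] at hm₁
      exact hdisj i0 i1 h01 hm₁ hP1c
    · rcases adj_acenter hadj₂ with h2 | ⟨j₂, rfl⟩
      · rw [h2] at hm₂
        exact hdisj i0 i1 h01 hm₂ hP1c
      · have hj12 : j₁ ≠ j₂ := by
          intro h
          exact hne12 (by rw [h])
        rcases eq_or_ne j₁ (⟨0, hd⟩ : Fin d) with rfl | hjz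
        · refine hblock i0 (Sum.inr ⟨0, hb⟩, Sum.inr j₂) (Sum.inl 0, Sum.inr j₂)
            (Sum.inr ⟨0, hb⟩, Sum.inl 0) (fun w hw => adj_corner hw) (hcoverRow j₂)
            ((p i0).snd_mem_support_of_mem_edges hm₂) (by rw [hx0]; simp) ?_
          rw [hy0]
          simp only [ne_eq, Prod.mk.injEq, Sum.inr.injEq, not_and]
          intro _ h
          exact hj12 h.symm
        · refine hblock i0 (Sum.inr ⟨0, hb⟩, Sum.inr j₁) (Sum.inl 0, Sum.inr j₁)
            (Sum.inr ⟨0, hb⟩, Sum.inl 0) (fun w hw => adj_corner hw) (hcoverRow j₁)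
            ((p i0).snd_mem_support_of_mem_edges hm₁) (by rw [hx0]; simp) ?_
          rw [hy0]
          simp only [ne_eq, Prod.mk.injEq, Sum.inr.injEq, not_and]
          intro _ h
          exact hjz h
end
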